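/- Every infinite acyclically indecomposable tournament contains a subtournament isomorphic to a member of 𝔅. -/

import Mathlib

universe u v

/-- `r` is a tournament relation on `V`: irreflexive and, for distinct vertices,
exactly one of the two directed edges is present. -/
def IsTournament {V : Type u} (r : V → V → Prop) : Prop :=
  (∀ x, ¬ r x x) ∧ ∀ x y : V, x ≠ y → (r x y ↔ ¬ r y x)

/-- A subset `A` is autonomous in the tournament `r`. -/
def Autonomous {V : Type u} (r : V → V → Prop) (A : Set V) : Prop :=
  ∀ x ∈ A, ∀ x' ∈ A, ∀ y ∉ A, (r x y ↔ r x' y)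

/-- A subset `A` is acyclic: it contains no 3-cycle. -/
def AcyclicSet {V : Type u} (r : V → V → Prop) (A : Set V) : Prop :=
  ¬ ∃ a ∈ A, ∃ b ∈ A, ∃ c ∈ A, r a b ∧ r b c ∧ r c a

/-- The acyclic component of a vertex `x`: the union of all acyclic autonomous
subsets containing `x`. -/
def acyclicComponent {V : Type u} (r : V → V → Prop) (x : V) : Set V :=
  ⋃₀ {A : Set V | x ∈ A ∧ Autonomous r A ∧ AcyclicSet r A}

/-- `A` is an acyclic component of the tournament `r`. -/
def IsAcyclicComponent {V : Type u} (r : V → V → Prop) (A : Set V) : Prop :=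
  ∃ x, A = acyclicComponent r x

/-- A tournament is acyclically indecomposable if every acyclic autonomous subset
has at most one element. -/
def AcyclicallyIndecomposable {V : Type u} (r : V → V → Prop) : Prop :=
  ∀ A : Set V, Autonomous r A → AcyclicSet r A → A.Subsingleton

/-- The type of acyclic components of `r`. -/
def AcComp {V : Type u} (r : V → V → Prop) : Type u :=
  {A : Set V // IsAcyclicComponent r A}

/-- The quotient tournament `Ť` on the set of acyclic components. -/
def quotRel {V : Type u} (r : V → V → Prop) : AcComp r → AcComp r → Prop :=
  fun A B => A ≠ B ∧ ∃ x ∈ A.val, ∃ y ∈ B.val, r x y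

/-- The lexicographical sum of the tournaments `rels i` indexed by the tournament `d`. -/
def lexSumRel {I : Type u} {F : I → Type v} (d : I → I → Prop)
    (rels : ∀ i, F i → F i → Prop) : (Σ i, F i) → (Σ i, F i) → Prop :=
  fun p q => (p.1 ≠ q.1 ∧ d p.1 q.1) ∨
    ∃ h : p.1 = q.1, rels q.1 (cast (congrArg F h) p.2) q.2

/-- The subtournaments induced on the finite sets `s` and `t` are isomorphic. -/
def InducedIso {V : Type u} (r : V → V → Prop) (s t : Finset V) : Prop :=
  ∃ e : {x // x ∈ s} ≃ {x // x ∈ t},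
    ∀ a b : {x // x ∈ s}, r a.val b.val ↔ r (e a).val (e b).val

/-- The profile of a tournament: the number of isomorphism classes of subtournaments
induced on `n`-element subsets of the vertex set. -/
noncomputable def profile {V : Type u} (r : V → V → Prop) (n : ℕ) : ℕ :=
  Nat.card (Quot (fun s t : {w : Finset V // w.card = n} => InducedIso r s.val t.val))

/-- `r` is (isomorphic to) a lexicographical sum of acyclic tournaments indexed by a
finite tournament. -/
def IsFiniteLexSumOfAcyclic {V : Type u} (r : V → V → Prop) : Prop :=
  ∃ (I : Type) (d : I → I → Prop) (F : I → Type u)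
    (rels : ∀ i, F i → F i → Prop),
    Finite I ∧ IsTournament d ∧
    (∀ i, IsTournament (rels i) ∧ AcyclicSet (rels i) Set.univ) ∧
    ∃ e : V ≃ (Σ i, F i), ∀ x y, r x y ↔ lexSumRel d rels (e x) (e y)

/-- A bundled tournament (vertex type together with its edge relation). -/
structure Tour : Type 1 where
  V : Type
  rel : V → V → Prop

/-- `S` is embeddable in the tournament `r`: `S` is isomorphic to a subtournament of `r`. -/
def Tour.EmbedsIn {W : Type u} (S : Tour) (r : W → W → Prop) : Prop :=
  ∃ f : S.V → W, Function.Injective f ∧ ∀ x y, S.rel x y ↔ r (f x) (f y)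

/-- The profile of a bundled tournament. -/
noncomputable def Tour.profile (T : Tour) (n : ℕ) : ℕ := _root_.profile T.rel n

/-- The quotient tournament `Ť` of a bundled tournament, on its acyclic components. -/
def Tour.check (T : Tour) : Tour := ⟨AcComp T.rel, quotRel T.rel⟩

/-- The tournament `C3[C]` for an acyclic tournament `C = (A, lt)`. -/
def c3Rel {A : Type} (lt : A → A → Prop) : A × Fin 3 → A × Fin 3 → Prop :=
  fun p q => lt p.1 q.1 ∨ (p.1 = q.1 ∧
    ((p.2 = 0 ∧ q.2 = 1) ∨ (p.2 = 1 ∧ q.2 = 2) ∨ (p.2 = 2 ∧ q.2 = 0)))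

/-- The tournament `V[C]` for an acyclic tournament `C = (A, lt)`; `none` is the extra vertex. -/
def vRel {A : Type} (lt : A → A → Prop) (p q : Option (A × Fin 2)) : Prop :=
  match p, q with
  | some p, some q => lt p.1 q.1 ∨ (p.1 = q.1 ∧ p.2 = 0 ∧ q.2 = 1)
  | none, some q => q.2 = 0
  | some p, none => p.2 = 1
  | none, none => False

/-- The tournament `T[C]` for an acyclic tournament `C = (A, lt)`. -/
def tRel {A : Type} (lt : A → A → Prop) : A × Fin 2 → A × Fin 2 → Prop :=
  fun p q =>
    (p.2 = 0 ∧ q.2 = 0 ∧ lt p.1 q.1) ∨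
    (p.1 = q.1 ∧ p.2 = 0 ∧ q.2 = 1) ∨
    (p.2 = 1 ∧ q.2 = 1 ∧ lt p.1 q.1) ∨
    (p.2 = 1 ∧ q.2 = 0 ∧ lt q.1 p.1) ∨
    (p.2 = 0 ∧ q.2 = 1 ∧ lt q.1 p.1)

/-- The tournament `U[C]` for an acyclic tournament `C = (A, lt)`. -/
def uRel {A : Type} (lt : A → A → Prop) : A × Fin 2 → A × Fin 2 → Prop :=
  fun p q =>
    (p.2 = 0 ∧ q.2 = 0 ∧ lt p.1 q.1) ∨
    (p.1 = q.1 ∧ p.2 = 0 ∧ q.2 = 1) ∨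
    (p.2 = 1 ∧ q.2 = 1 ∧ lt q.1 p.1) ∨
    (p.2 = 0 ∧ q.2 = 1 ∧ lt p.1 q.1) ∨
    (p.2 = 1 ∧ q.2 = 0 ∧ lt p.1 q.1)

/-- The tournament `H[C]` for an acyclic tournament `C = (A, lt)`. -/
def hRel {A : Type} (lt : A → A → Prop) : A × Fin 2 → A × Fin 2 → Prop :=
  fun p q =>
    (p.2 = 0 ∧ q.2 = 0 ∧ lt p.1 q.1) ∨
    (p.1 = q.1 ∧ p.2 = 0 ∧ q.2 = 1) ∨
    (p.2 = 1 ∧ q.2 = 1 ∧ lt p.1 q.1) ∨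
    (p.2 = 1 ∧ q.2 = 0 ∧ lt q.1 p.1) ∨
    (p.2 = 1 ∧ q.2 = 0 ∧ lt p.1 q.1)

/-- The tournament `K[C]` for an acyclic tournament `C = (A, lt)`. -/
def kRel {A : Type} (lt : A → A → Prop) : A × Fin 2 → A × Fin 2 → Prop :=
  fun p q =>
    (p.2 = 0 ∧ q.2 = 0 ∧ lt p.1 q.1) ∨
    (p.1 = q.1 ∧ p.2 = 0 ∧ q.2 = 1) ∨
    (p.2 = 1 ∧ q.2 = 1 ∧ lt q.1 p.1) ∨
    (p.2 = 1 ∧ q.2 = 0 ∧ lt q.1 p.1) ∨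
    (p.2 = 1 ∧ q.2 = 0 ∧ lt p.1 q.1)

def c3Tour (A : Type) (lt : A → A → Prop) : Tour := ⟨A × Fin 3, c3Rel lt⟩
def vTour (A : Type) (lt : A → A → Prop) : Tour := ⟨Option (A × Fin 2), vRel lt⟩
def tTour (A : Type) (lt : A → A → Prop) : Tour := ⟨A × Fin 2, tRel lt⟩
def uTour (A : Type) (lt : A → A → Prop) : Tour := ⟨A × Fin 2, uRel lt⟩
def hTour (A : Type) (lt : A → A → Prop) : Tour := ⟨A × Fin 2, hRel lt⟩
def kTour (A : Type) (lt : A → A → Prop) : Tour := ⟨A × Fin 2, kRel lt⟩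

/-- The order type `ω`: the natural numbers with the usual strict order. -/
def omegaLT : ℕ → ℕ → Prop := fun m n => m < n

/-- The order type `ω*`: the natural numbers with the reversed strict order. -/
def omegaStarLT : ℕ → ℕ → Prop := fun m n => n < m

/-- The set `𝔅` of twelve tournaments. -/
def frakB : List Tour :=
  [c3Tour ℕ omegaLT, vTour ℕ omegaLT, tTour ℕ omegaLT,
   uTour ℕ omegaLT, hTour ℕ omegaLT, kTour ℕ omegaLT,
   c3Tour ℕ omegaStarLT, vTour ℕ omegaStarLT, tTour ℕ omegaStarLT,
   uTour ℕ omegaStarLT, hTour ℕ omegaStarLT, kTour ℕ omegaStarLT]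

/-- The set `𝔅_{n̲}` of six tournaments built on the acyclic tournament `({0,…,n−1},<)`. -/
def frakBn (n : ℕ) : List Tour :=
  [c3Tour (Fin n) (· < ·), vTour (Fin n) (· < ·), tTour (Fin n) (· < ·),
   uTour (Fin n) (· < ·), hTour (Fin n) (· < ·), kTour (Fin n) (· < ·)]



section Infra

variable {V : Type u} {r : V → V → Prop}

lemma ne_of_r (hT : IsTournament r) {x y : V} (h : r x y) : x ≠ y :=
  fun e => hT.1 x (by rw [e] at h ⊢; exact h)

lemma asymm_of_r (hT : IsTournament r) {x y : V} (h : r x y) : ¬ r y x := by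
  intro h'
  have hne : x ≠ y := ne_of_r hT h
  exact ((hT.2 x y hne).1 h) h'

lemma r_of_not_r (hT : IsTournament r) {x y : V} (hne : x ≠ y) (h : ¬ r y x) : r x y :=
  (hT.2 x y hne).2 h

/-- infinite pigeonhole on a set of naturals -/
lemma infinite_pigeonhole {C : Type} [Finite C] {S : Set ℕ} (hS : S.Infinite) (f : ℕ → C) :
    ∃ k, {n | n ∈ S ∧ f n = k}.Infinite := by
  have : Infinite S := hS.to_subtype
  obtain ⟨k, hk⟩ := Finite.exists_infinite_fiber (fun x : S => f x)
  refine ⟨k, ?_⟩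
  have h1 : ((fun x : S => f x) ⁻¹' {k}).Infinite := Set.infinite_coe_iff.mp hk
  have h2 : (Subtype.val '' ((fun x : S => f x) ⁻¹' {k})).Infinite :=
    h1.image (Subtype.val_injective.injOn)
  refine h2.mono ?_
  rintro n ⟨⟨m, hm⟩, hmk, rfl⟩
  exact ⟨hm, hmk⟩

lemma pigeon_subseq {C : Type} [Finite C] (f : ℕ → C) :
    ∃ (x : C) (ψ : ℕ → ℕ), StrictMono ψ ∧ ∀ n, f (ψ n) = x := by
  obtain ⟨k, hk⟩ := infinite_pigeonhole (Set.infinite_univ (α := ℕ)) f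
  have hk' : {n | n ∈ Set.univ ∧ f n = k} = setOf (fun n => f n = k) := by
    ext n; simp; exact Iff.rfl
  rw [hk'] at hk
  exact ⟨k, Nat.nth (fun n => f n = k), Nat.nth_strictMono hk,
    fun n => Nat.nth_mem_of_infinite hk n⟩

/-- step data for Ramsey -/
private lemma ramsey_step {C : Type} [Finite C] (c : ℕ → ℕ → C)
    (S : {S : Set ℕ // S.Infinite}) :
    ∃ (T : {S : Set ℕ // S.Infinite}) (k : C),
      (∀ n ∈ T.1, sInf S.1 < n) ∧ (∀ n ∈ T.1, n ∈ S.1) ∧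
      (∀ n ∈ T.1, c (sInf S.1) n = k) := by
  obtain ⟨S, hS⟩ := S
  set a := sInf S with ha
  have hS' : (S \ Set.Iic a).Infinite := hS.diff (Set.finite_Iic a)
  obtain ⟨k, hk⟩ := infinite_pigeonhole hS' (c a)
  refine ⟨⟨_, hk⟩, k, ?_, ?_, ?_⟩
  · rintro n ⟨⟨-, hn2⟩, -⟩; simpa using hn2
  · rintro n ⟨⟨hn1, -⟩, -⟩; exact hn1
  · rintro n ⟨-, hn⟩; exact hn

/-- Infinite Ramsey theorem for pairs with finitely many colours. -/
theorem ramsey2 {C : Type} [Finite C] (c : ℕ → ℕ → C) :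
    ∃ (φ : ℕ → ℕ) (x : C), StrictMono φ ∧ ∀ i j, i < j → c (φ i) (φ j) = x := by
  classical
  -- nested sequence of states
  let F : ℕ → {S : Set ℕ // S.Infinite} :=
    fun n => Nat.rec ⟨Set.univ, Set.infinite_univ⟩
      (fun _ S => (ramsey_step c S).choose) n
  have hF : ∀ n, F (n+1) = (ramsey_step c (F n)).choose := fun n => rfl
  let a : ℕ → ℕ := fun n => sInf (F n).1
  let k : ℕ → C := fun n => (ramsey_step c (F n)).choose_spec.choose
  have hspec : ∀ n, (∀ m ∈ (F (n+1)).1, a n < m) ∧ (∀ m ∈ (F (n+1)).1, m ∈ (F n).1) ∧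
      (∀ m ∈ (F (n+1)).1, c (a n) m = k n) := by
    intro n
    have := (ramsey_step c (F n)).choose_spec.choose_spec
    rw [hF n]
    exact this
  have hmem : ∀ n, a n ∈ (F n).1 := fun n => Nat.sInf_mem ((F n).2.nonempty)
  have hnested : ∀ i j, i ≤ j → (F j).1 ⊆ (F i).1 := by
    intro i j hij
    induction j with
    | zero => have : i = 0 := Nat.le_zero.mp hij; subst this; exact fun _ h => h
    | succ j ih =>
      rcases Nat.lt_or_ge i (j+1) with h | h
      · exact fun m hm => ih (Nat.lt_succ_iff.mp h) ((hspec j).2.1 m hm)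
      · have : i = j + 1 := le_antisymm hij h
        subst this; exact fun _ h => h
  have hlt : ∀ i j, i < j → a i < a j := by
    intro i j hij
    have h1 : a j ∈ (F (i+1)).1 := hnested (i+1) j hij (hmem j)
    exact (hspec i).1 _ h1
  have hcol : ∀ i j, i < j → c (a i) (a j) = k i := by
    intro i j hij
    exact (hspec i).2.2 _ (hnested (i+1) j hij (hmem j))
  obtain ⟨x, ψ, hψ, hx⟩ := pigeon_subseq k
  refine ⟨fun n => a (ψ n), x, ?_, ?_⟩
  · intro i j hij
    exact hlt _ _ (hψ hij)
  · intro i j hij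
    rw [hcol _ _ (hψ hij)]
    exact hx i

end Infra


section Emb

variable {V : Type u} {r : V → V → Prop}

/-- goal shorthand -/
def MemB {V : Type u} (r : V → V → Prop) : Prop := ∃ S ∈ frakB, S.EmbedsIn r

lemma char_lt (hT : IsTournament r) {x : ℕ → V} (hx : ∀ i j, i < j → r (x i) (x j)) :
    ∀ i j, r (x i) (x j) ↔ i < j := by
  intro i j
  constructor
  · intro h
    rcases lt_trichotomy i j with h' | h' | h'
    · exact h'
    · exact absurd h (by rw [h']; exact hT.1 _)
    · exact absurd h (asymm_of_r hT (hx _ _ h'))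
  · exact hx i j

lemma char_split (hT : IsTournament r) {x y : ℕ → V} {P : ℕ → ℕ → Prop}
    (h1 : ∀ i j, P i j → r (x i) (y j)) (h2 : ∀ i j, ¬ P i j → r (y j) (x i)) :
    ∀ i j, r (x i) (y j) ↔ P i j := by
  intro i j
  constructor
  · intro h; by_contra hP; exact asymm_of_r hT (h2 i j hP) h
  · exact h1 i j

/-- build an embedding from the relation-iff, using totality of the source. -/
lemma embeds_of_rel (hT : IsTournament r) {S : Tour} (f : S.V → V)
    (htot : ∀ a b : S.V, a ≠ b → S.rel a b ∨ S.rel b a)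
    (h : ∀ x y, S.rel x y ↔ r (f x) (f y)) : S.EmbedsIn r := by
  refine ⟨f, ?_, h⟩
  intro a b hab
  by_contra hne
  rcases htot a b hne with hr | hr
  · exact hT.1 (f b) (hab ▸ (h a b).mp hr)
  · have h2 := (h b a).mp hr
    rw [hab] at h2
    exact hT.1 (f b) h2

lemma vRel_total {lt : ℕ → ℕ → Prop} (htot : ∀ m n : ℕ, m ≠ n → lt m n ∨ lt n m) :
    ∀ a b : Option (ℕ × Fin 2), a ≠ b → vRel lt a b ∨ vRel lt b a := by
  rintro (_ | ⟨n, i⟩) (_ | ⟨m, j⟩) hne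
  · simp at hne
  · fin_cases j <;> simp [vRel]
  · fin_cases i <;> simp [vRel]
  · by_cases hnm : n = m
    · subst hnm
      fin_cases i <;> fin_cases j <;> simp_all [vRel]
    · rcases htot n m hnm with h | h
      · left; exact Or.inl h
      · right; exact Or.inl h

lemma c3Rel_total {lt : ℕ → ℕ → Prop} (htot : ∀ m n : ℕ, m ≠ n → lt m n ∨ lt n m) :
    ∀ a b : ℕ × Fin 3, a ≠ b → c3Rel lt a b ∨ c3Rel lt b a := by
  rintro ⟨n, i⟩ ⟨m, j⟩ hne
  by_cases hnm : n = m
  · subst hnm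
    fin_cases i <;> fin_cases j <;> simp_all [c3Rel]
  · rcases htot n m hnm with h | h
    · left; exact Or.inl h
    · right; exact Or.inl h

lemma tRel_total {lt : ℕ → ℕ → Prop} (htot : ∀ m n : ℕ, m ≠ n → lt m n ∨ lt n m) :
    ∀ a b : ℕ × Fin 2, a ≠ b → tRel lt a b ∨ tRel lt b a := by
  rintro ⟨n, i⟩ ⟨m, j⟩ hne
  by_cases hnm : n = m
  · subst hnm
    fin_cases i <;> fin_cases j <;> simp_all [tRel]
  · rcases htot n m hnm with h | h <;> fin_cases i <;> fin_cases j <;> simp [tRel, h] <;> tauto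
lemma uRel_total {lt : ℕ → ℕ → Prop} (htot : ∀ m n : ℕ, m ≠ n → lt m n ∨ lt n m) :
    ∀ a b : ℕ × Fin 2, a ≠ b → uRel lt a b ∨ uRel lt b a := by
  rintro ⟨n, i⟩ ⟨m, j⟩ hne
  by_cases hnm : n = m
  · subst hnm
    fin_cases i <;> fin_cases j <;> simp_all [uRel]
  · rcases htot n m hnm with h | h <;> fin_cases i <;> fin_cases j <;> simp [uRel, h] <;> tauto
lemma hRel_total {lt : ℕ → ℕ → Prop} (htot : ∀ m n : ℕ, m ≠ n → lt m n ∨ lt n m) :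
    ∀ a b : ℕ × Fin 2, a ≠ b → hRel lt a b ∨ hRel lt b a := by
  rintro ⟨n, i⟩ ⟨m, j⟩ hne
  by_cases hnm : n = m
  · subst hnm
    fin_cases i <;> fin_cases j <;> simp_all [hRel]
  · rcases htot n m hnm with h | h <;> fin_cases i <;> fin_cases j <;> simp [hRel, h] <;> tauto
lemma kRel_total {lt : ℕ → ℕ → Prop} (htot : ∀ m n : ℕ, m ≠ n → lt m n ∨ lt n m) :
    ∀ a b : ℕ × Fin 2, a ≠ b → kRel lt a b ∨ kRel lt b a := by
  rintro ⟨n, i⟩ ⟨m, j⟩ hne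
  by_cases hnm : n = m
  · subst hnm
    fin_cases i <;> fin_cases j <;> simp_all [kRel]
  · rcases htot n m hnm with h | h <;> fin_cases i <;> fin_cases j <;> simp [kRel, h] <;> tauto

lemma omegaLT_total : ∀ m n : ℕ, m ≠ n → omegaLT m n ∨ omegaLT n m := by
  intro m n h; simp [omegaLT]; omega
lemma omegaStarLT_total : ∀ m n : ℕ, m ≠ n → omegaStarLT m n ∨ omegaStarLT n m := by
  intro m n h; simp [omegaStarLT]; omega

/-- The V-lemma: an apex `t` together with an increasing sequence of pairs gives `V[ω]`. -/
lemma vlemF (hT : IsTournament r) (t : V) (p q : ℕ → V)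
    (hpq : ∀ i, r (p i) (q i))
    (hcr : ∀ i j, i < j → r (p i) (p j) ∧ r (p i) (q j) ∧ r (q i) (p j) ∧ r (q i) (q j))
    (htp : ∀ i, r t (p i)) (hqt : ∀ i, r (q i) t) : MemB r := by
  classical
  have cpp := char_lt hT (fun i j h => (hcr i j h).1)
  have cqq := char_lt hT (fun i j h => (hcr i j h).2.2.2)
  have cpq : ∀ i j, r (p i) (q j) ↔ i ≤ j :=
    char_split hT (x := p) (y := q) (P := fun i j => i ≤ j)
      (fun i j h => by rcases lt_or_eq_of_le h with h | h
                       · exact (hcr i j h).2.1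
                       · subst h; exact hpq _)
      (fun i j h => (hcr j i (not_le.mp h)).2.2.1)
  have cqp : ∀ i j, r (q i) (p j) ↔ i < j :=
    char_split hT (x := q) (y := p) (P := fun i j => i < j)
      (fun i j h => (hcr i j h).2.2.1)
      (fun i j h => by rcases lt_or_eq_of_le (not_lt.mp h) with h | h
                       · exact (hcr j i h).2.1
                       · subst h; exact hpq _)
  refine ⟨vTour ℕ omegaLT, by simp [frakB], ?_⟩
  refine embeds_of_rel hT (S := vTour ℕ omegaLT)
    (fun x => match x with
      | none => t
      | some (n, i) => if i = 0 then p n else q n) (vRel_total omegaLT_total) ?_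
  rintro (_ | ⟨n, i⟩) (_ | ⟨m, j⟩)
  · show vRel omegaLT none none ↔ r t t
    simpa [vRel] using hT.1 t
  · show vRel omegaLT none (some (m, j)) ↔ _
    fin_cases j
    · simpa [vRel] using htp m
    · simpa [vRel] using asymm_of_r hT (hqt m)
  · show vRel omegaLT (some (n, i)) none ↔ _
    fin_cases i
    · simpa [vRel] using asymm_of_r hT (htp n)
    · simpa [vRel] using hqt n
  · show vRel omegaLT (some (n, i)) (some (m, j)) ↔ _
    fin_cases i <;> fin_cases j <;>
      simp only [vRel, omegaLT] <;> simp [cpp, cqq, cpq n m, cqp n m] <;> omega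

end Emb


section Pat

variable {V : Type u} {r : V → V → Prop}

lemma char_gt (hT : IsTournament r) {x : ℕ → V} (hx : ∀ i j, i < j → r (x j) (x i)) :
    ∀ i j, r (x i) (x j) ↔ j < i := by
  intro i j
  constructor
  · intro h
    rcases lt_trichotomy i j with h' | h' | h'
    · exact absurd h (asymm_of_r hT (hx _ _ h'))
    · exact absurd h (by rw [h']; exact hT.1 _)
    · exact h'
  · exact fun h' => hx j i h'

/-! ### Pattern lemmas: chain `X` with partners `Y`, `r (X i) (Y i)` internal.
Bits (for `i < j`): α = Y i → X j, β = X i → Y j, γ = Y i → Y j. -/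

/-- forward chain, pattern (F,F,T) gives T[ω] -/
lemma patF_FFT (hT : IsTournament r) (X Y : ℕ → V)
    (hXX : ∀ i j, i < j → r (X i) (X j)) (hI : ∀ i, r (X i) (Y i))
    (hA : ∀ i j, i < j → r (X j) (Y i)) (hB : ∀ i j, i < j → r (Y j) (X i))
    (hG : ∀ i j, i < j → r (Y i) (Y j)) : MemB r := by
  have cXX := char_lt hT hXX
  have cYY := char_lt hT hG
  have cYX : ∀ i j, r (Y i) (X j) ↔ j < i := char_split hT (P := fun i j => j < i)
    (fun i j h => hB j i h)
    (fun i j h => by rcases eq_or_lt_of_le (not_lt.mp h) with h' | h'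
                     · exact h' ▸ hI i
                     · exact hA i j h')
  have cXY : ∀ i j, r (X i) (Y j) ↔ j ≤ i := char_split hT (P := fun i j => j ≤ i)
    (fun i j h => by rcases eq_or_lt_of_le h with h' | h'
                     · exact h' ▸ hI j
                     · exact hA j i h')
    (fun i j h => hB i j (not_le.mp h))
  refine ⟨tTour ℕ omegaLT, by simp [frakB], ?_⟩
  refine embeds_of_rel hT (S := tTour ℕ omegaLT)
    (fun p => if p.2 = 0 then X p.1 else Y p.1) (tRel_total omegaLT_total) ?_
  rintro ⟨n, i⟩ ⟨m, j⟩
  fin_cases i <;> fin_cases j <;>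
    simp only [tTour, tRel, omegaLT] <;>
    simp [cXX, cYY, cYX n m, cXY n m] <;> omega

/-- forward chain, pattern (T,T,F) gives U[ω] -/
lemma patF_TTF (hT : IsTournament r) (X Y : ℕ → V)
    (hXX : ∀ i j, i < j → r (X i) (X j)) (hI : ∀ i, r (X i) (Y i))
    (hA : ∀ i j, i < j → r (Y i) (X j)) (hB : ∀ i j, i < j → r (X i) (Y j))
    (hG : ∀ i j, i < j → r (Y j) (Y i)) : MemB r := by
  have cXX := char_lt hT hXX
  have cYY := char_gt hT hG

  have cYX : ∀ i j, r (Y i) (X j) ↔ i < j := char_split hT (P := fun i j => i < j)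
    (fun i j h => hA i j h)
    (fun i j h => by rcases eq_or_lt_of_le (not_lt.mp h) with h' | h'
                     · exact h' ▸ hI j
                     · exact hB j i h')
  have cXY : ∀ i j, r (X i) (Y j) ↔ i ≤ j := char_split hT (P := fun i j => i ≤ j)
    (fun i j h => by rcases eq_or_lt_of_le h with h' | h'
                     · exact h' ▸ hI i
                     · exact hB i j h')
    (fun i j h => hA j i (not_le.mp h))
  refine ⟨uTour ℕ omegaLT, by simp [frakB], ?_⟩
  refine embeds_of_rel hT (S := uTour ℕ omegaLT)
    (fun p => if p.2 = 0 then X p.1 else Y p.1) (uRel_total omegaLT_total) ?_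
  rintro ⟨n, i⟩ ⟨m, j⟩
  fin_cases i <;> fin_cases j <;>
    simp only [uTour, uRel, omegaLT] <;>
    simp [cXX, cYY n m, cYX n m, cXY n m] <;> omega

/-- forward chain, pattern (T,F,T) gives H[ω] -/
lemma patF_TFT (hT : IsTournament r) (X Y : ℕ → V)
    (hXX : ∀ i j, i < j → r (X i) (X j)) (hI : ∀ i, r (X i) (Y i))
    (hA : ∀ i j, i < j → r (Y i) (X j)) (hB : ∀ i j, i < j → r (Y j) (X i))
    (hG : ∀ i j, i < j → r (Y i) (Y j)) : MemB r := by
  have cXX := char_lt hT hXX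
  have cYY := char_lt hT hG
  have cYX : ∀ i j, r (Y i) (X j) ↔ i ≠ j := char_split hT (P := fun i j => i ≠ j)
    (fun i j h => by rcases lt_or_gt_of_ne h with h' | h'
                     · exact hA i j h'
                     · exact hB j i h')
    (fun i j h => by have e := not_ne_iff.mp h; exact e ▸ hI i)
  have cXY : ∀ i j, r (X i) (Y j) ↔ i = j := char_split hT (P := fun i j => i = j)
    (fun i j h => h ▸ hI i)
    (fun i j h => by rcases lt_or_gt_of_ne h with h' | h'
                     · exact hB i j h'
                     · exact hA j i h')
  refine ⟨hTour ℕ omegaLT, by simp [frakB], ?_⟩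
  refine embeds_of_rel hT (S := hTour ℕ omegaLT)
    (fun p => if p.2 = 0 then X p.1 else Y p.1) (hRel_total omegaLT_total) ?_
  rintro ⟨n, i⟩ ⟨m, j⟩
  fin_cases i <;> fin_cases j <;>
    simp only [hTour, hRel, omegaLT] <;>
    simp [cXX, cYY, cYX n m, cXY n m] <;> omega

/-- forward chain, pattern (T,F,F) gives K[ω] -/
lemma patF_TFF (hT : IsTournament r) (X Y : ℕ → V)
    (hXX : ∀ i j, i < j → r (X i) (X j)) (hI : ∀ i, r (X i) (Y i))
    (hA : ∀ i j, i < j → r (Y i) (X j)) (hB : ∀ i j, i < j → r (Y j) (X i))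
    (hG : ∀ i j, i < j → r (Y j) (Y i)) : MemB r := by
  have cXX := char_lt hT hXX
  have cYY := char_gt hT hG

  have cYX : ∀ i j, r (Y i) (X j) ↔ i ≠ j := char_split hT (P := fun i j => i ≠ j)
    (fun i j h => by rcases lt_or_gt_of_ne h with h' | h'
                     · exact hA i j h'
                     · exact hB j i h')
    (fun i j h => by have e := not_ne_iff.mp h; exact e ▸ hI i)
  have cXY : ∀ i j, r (X i) (Y j) ↔ i = j := char_split hT (P := fun i j => i = j)
    (fun i j h => h ▸ hI i)
    (fun i j h => by rcases lt_or_gt_of_ne h with h' | h'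
                     · exact hB i j h'
                     · exact hA j i h')
  refine ⟨kTour ℕ omegaLT, by simp [frakB], ?_⟩
  refine embeds_of_rel hT (S := kTour ℕ omegaLT)
    (fun p => if p.2 = 0 then X p.1 else Y p.1) (kRel_total omegaLT_total) ?_
  rintro ⟨n, i⟩ ⟨m, j⟩
  fin_cases i <;> fin_cases j <;>
    simp only [kTour, kRel, omegaLT] <;>
    simp [cXX, cYY n m, cYX n m, cXY n m] <;> omega

/-- forward chain, pattern (F,F,F) gives U[ω*] -/
lemma patF_FFF (hT : IsTournament r) (X Y : ℕ → V)
    (hXX : ∀ i j, i < j → r (X i) (X j)) (hI : ∀ i, r (X i) (Y i))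
    (hA : ∀ i j, i < j → r (X j) (Y i)) (hB : ∀ i j, i < j → r (Y j) (X i))
    (hG : ∀ i j, i < j → r (Y j) (Y i)) : MemB r := by
  have cXX := char_lt hT hXX
  have cYY := char_gt hT hG

  have cYX : ∀ i j, r (Y i) (X j) ↔ j < i := char_split hT (P := fun i j => j < i)
    (fun i j h => hB j i h)
    (fun i j h => by rcases eq_or_lt_of_le (not_lt.mp h) with h' | h'
                     · exact h' ▸ hI i
                     · exact hA i j h')
  have cXY : ∀ i j, r (X i) (Y j) ↔ j ≤ i := char_split hT (P := fun i j => j ≤ i)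
    (fun i j h => by rcases eq_or_lt_of_le h with h' | h'
                     · exact h' ▸ hI j
                     · exact hA j i h')
    (fun i j h => hB i j (not_le.mp h))
  refine ⟨uTour ℕ omegaStarLT, by simp [frakB], ?_⟩
  refine embeds_of_rel hT (S := uTour ℕ omegaStarLT)
    (fun p => if p.2 = 0 then Y (2 * p.1 + 1) else X (2 * p.1)) (uRel_total omegaStarLT_total) ?_
  rintro ⟨n, i⟩ ⟨m, j⟩
  fin_cases i <;> fin_cases j <;>
    simp only [uTour, uRel, omegaStarLT] <;>
    simp [cXX, cYY, cYX, cXY] <;> omega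

end Pat


section Pat2

variable {V : Type u} {r : V → V → Prop}

/-- backward chain, pattern (T,T,F) gives T[ω*] -/
lemma patB_TTF (hT : IsTournament r) (X Y : ℕ → V)
    (hXX : ∀ i j, i < j → r (X j) (X i)) (hI : ∀ i, r (X i) (Y i))
    (hA : ∀ i j, i < j → r (Y i) (X j)) (hB : ∀ i j, i < j → r (X i) (Y j))
    (hG : ∀ i j, i < j → r (Y j) (Y i)) : MemB r := by
  have cXX := char_gt hT hXX
  have cYY := char_gt hT hG
  have cYX : ∀ i j, r (Y i) (X j) ↔ i < j := char_split hT (P := fun i j => i < j)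
    (fun i j h => hA i j h)
    (fun i j h => by rcases eq_or_lt_of_le (not_lt.mp h) with h' | h'
                     · exact h' ▸ hI j
                     · exact hB j i h')
  have cXY : ∀ i j, r (X i) (Y j) ↔ i ≤ j := char_split hT (P := fun i j => i ≤ j)
    (fun i j h => by rcases eq_or_lt_of_le h with h' | h'
                     · exact h' ▸ hI i
                     · exact hB i j h')
    (fun i j h => hA j i (not_le.mp h))
  refine ⟨tTour ℕ omegaStarLT, by simp [frakB], ?_⟩
  refine embeds_of_rel hT (S := tTour ℕ omegaStarLT)
    (fun p => if p.2 = 0 then X p.1 else Y p.1) (tRel_total omegaStarLT_total) ?_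
  rintro ⟨n, i⟩ ⟨m, j⟩
  fin_cases i <;> fin_cases j <;>
    simp only [tTour, tRel, omegaStarLT] <;>
    simp [cXX, cYY, cYX n m, cXY n m] <;> omega

/-- backward chain, pattern (F,F,T) gives U[ω*] -/
lemma patB_FFT (hT : IsTournament r) (X Y : ℕ → V)
    (hXX : ∀ i j, i < j → r (X j) (X i)) (hI : ∀ i, r (X i) (Y i))
    (hA : ∀ i j, i < j → r (X j) (Y i)) (hB : ∀ i j, i < j → r (Y j) (X i))
    (hG : ∀ i j, i < j → r (Y i) (Y j)) : MemB r := by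
  have cXX := char_gt hT hXX
  have cYY := char_lt hT hG
  have cYX : ∀ i j, r (Y i) (X j) ↔ j < i := char_split hT (P := fun i j => j < i)
    (fun i j h => hB j i h)
    (fun i j h => by rcases eq_or_lt_of_le (not_lt.mp h) with h' | h'
                     · exact h' ▸ hI i
                     · exact hA i j h')
  have cXY : ∀ i j, r (X i) (Y j) ↔ j ≤ i := char_split hT (P := fun i j => j ≤ i)
    (fun i j h => by rcases eq_or_lt_of_le h with h' | h'
                     · exact h' ▸ hI j
                     · exact hA j i h')
    (fun i j h => hB i j (not_le.mp h))
  refine ⟨uTour ℕ omegaStarLT, by simp [frakB], ?_⟩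
  refine embeds_of_rel hT (S := uTour ℕ omegaStarLT)
    (fun p => if p.2 = 0 then X p.1 else Y p.1) (uRel_total omegaStarLT_total) ?_
  rintro ⟨n, i⟩ ⟨m, j⟩
  fin_cases i <;> fin_cases j <;>
    simp only [uTour, uRel, omegaStarLT] <;>
    simp [cXX, cYY, cYX n m, cXY n m] <;> omega

/-- backward chain, pattern (T,F,F) gives H[ω*] -/
lemma patB_TFF (hT : IsTournament r) (X Y : ℕ → V)
    (hXX : ∀ i j, i < j → r (X j) (X i)) (hI : ∀ i, r (X i) (Y i))
    (hA : ∀ i j, i < j → r (Y i) (X j)) (hB : ∀ i j, i < j → r (Y j) (X i))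
    (hG : ∀ i j, i < j → r (Y j) (Y i)) : MemB r := by
  have cXX := char_gt hT hXX
  have cYY := char_gt hT hG
  have cYX : ∀ i j, r (Y i) (X j) ↔ i ≠ j := char_split hT (P := fun i j => i ≠ j)
    (fun i j h => by rcases lt_or_gt_of_ne h with h' | h'
                     · exact hA i j h'
                     · exact hB j i h')
    (fun i j h => by have e := not_ne_iff.mp h; exact e ▸ hI i)
  have cXY : ∀ i j, r (X i) (Y j) ↔ i = j := char_split hT (P := fun i j => i = j)
    (fun i j h => h ▸ hI i)
    (fun i j h => by rcases lt_or_gt_of_ne h with h' | h'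
                     · exact hB i j h'
                     · exact hA j i h')
  refine ⟨hTour ℕ omegaStarLT, by simp [frakB], ?_⟩
  refine embeds_of_rel hT (S := hTour ℕ omegaStarLT)
    (fun p => if p.2 = 0 then X p.1 else Y p.1) (hRel_total omegaStarLT_total) ?_
  rintro ⟨n, i⟩ ⟨m, j⟩
  fin_cases i <;> fin_cases j <;>
    simp only [hTour, hRel, omegaStarLT] <;>
    simp [cXX, cYY, cYX n m, cXY n m] <;> omega

/-- backward chain, pattern (T,F,T) gives K[ω*] -/
lemma patB_TFT (hT : IsTournament r) (X Y : ℕ → V)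
    (hXX : ∀ i j, i < j → r (X j) (X i)) (hI : ∀ i, r (X i) (Y i))
    (hA : ∀ i j, i < j → r (Y i) (X j)) (hB : ∀ i j, i < j → r (Y j) (X i))
    (hG : ∀ i j, i < j → r (Y i) (Y j)) : MemB r := by
  have cXX := char_gt hT hXX
  have cYY := char_lt hT hG
  have cYX : ∀ i j, r (Y i) (X j) ↔ i ≠ j := char_split hT (P := fun i j => i ≠ j)
    (fun i j h => by rcases lt_or_gt_of_ne h with h' | h'
                     · exact hA i j h'
                     · exact hB j i h')
    (fun i j h => by have e := not_ne_iff.mp h; exact e ▸ hI i)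
  have cXY : ∀ i j, r (X i) (Y j) ↔ i = j := char_split hT (P := fun i j => i = j)
    (fun i j h => h ▸ hI i)
    (fun i j h => by rcases lt_or_gt_of_ne h with h' | h'
                     · exact hB i j h'
                     · exact hA j i h')
  refine ⟨kTour ℕ omegaStarLT, by simp [frakB], ?_⟩
  refine embeds_of_rel hT (S := kTour ℕ omegaStarLT)
    (fun p => if p.2 = 0 then X p.1 else Y p.1) (kRel_total omegaStarLT_total) ?_
  rintro ⟨n, i⟩ ⟨m, j⟩
  fin_cases i <;> fin_cases j <;>
    simp only [kTour, kRel, omegaStarLT] <;>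
    simp [cXX, cYY, cYX n m, cXY n m] <;> omega

/-- backward chain, pattern (T,T,T) gives U[ω] -/
lemma patB_TTT (hT : IsTournament r) (X Y : ℕ → V)
    (hXX : ∀ i j, i < j → r (X j) (X i)) (hI : ∀ i, r (X i) (Y i))
    (hA : ∀ i j, i < j → r (Y i) (X j)) (hB : ∀ i j, i < j → r (X i) (Y j))
    (hG : ∀ i j, i < j → r (Y i) (Y j)) : MemB r := by
  have cXX := char_gt hT hXX
  have cYY := char_lt hT hG
  have cYX : ∀ i j, r (Y i) (X j) ↔ i < j := char_split hT (P := fun i j => i < j)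
    (fun i j h => hA i j h)
    (fun i j h => by rcases eq_or_lt_of_le (not_lt.mp h) with h' | h'
                     · exact h' ▸ hI j
                     · exact hB j i h')
  have cXY : ∀ i j, r (X i) (Y j) ↔ i ≤ j := char_split hT (P := fun i j => i ≤ j)
    (fun i j h => by rcases eq_or_lt_of_le h with h' | h'
                     · exact h' ▸ hI i
                     · exact hB i j h')
    (fun i j h => hA j i (not_le.mp h))
  refine ⟨uTour ℕ omegaLT, by simp [frakB], ?_⟩
  refine embeds_of_rel hT (S := uTour ℕ omegaLT)
    (fun p => if p.2 = 0 then Y (2 * p.1) else X (2 * p.1 + 1)) (uRel_total omegaLT_total) ?_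
  rintro ⟨n, i⟩ ⟨m, j⟩
  fin_cases i <;> fin_cases j <;>
    simp only [uTour, uRel, omegaLT] <;>
    simp [cXX, cYY, cYX, cXY] <;> omega

end Pat2


section Build2

variable {V : Type u} {r : V → V → Prop}

/-- The V-lemma, descending version: gives `V[ω*]`. -/
lemma vlemB (hT : IsTournament r) (t : V) (p q : ℕ → V)
    (hpq : ∀ i, r (p i) (q i))
    (hcr : ∀ i j, i < j → r (p j) (p i) ∧ r (p j) (q i) ∧ r (q j) (p i) ∧ r (q j) (q i))
    (htp : ∀ i, r t (p i)) (hqt : ∀ i, r (q i) t) : MemB r := by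
  classical
  have cpp := char_gt hT (fun i j h => (hcr i j h).1)
  have cqq := char_gt hT (fun i j h => (hcr i j h).2.2.2)
  have cpq : ∀ i j, r (p i) (q j) ↔ j ≤ i :=
    char_split hT (x := p) (y := q) (P := fun i j => j ≤ i)
      (fun i j h => by rcases lt_or_eq_of_le h with h | h
                       · exact (hcr j i h).2.1
                       · subst h; exact hpq _)
      (fun i j h => (hcr i j (not_le.mp h)).2.2.1)
  have cqp : ∀ i j, r (q i) (p j) ↔ j < i :=
    char_split hT (x := q) (y := p) (P := fun i j => j < i)
      (fun i j h => (hcr j i h).2.2.1)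
      (fun i j h => by rcases lt_or_eq_of_le (not_lt.mp h) with h | h
                       · exact (hcr i j h).2.1
                       · subst h; exact hpq _)
  refine ⟨vTour ℕ omegaStarLT, by simp [frakB], ?_⟩
  refine embeds_of_rel hT (S := vTour ℕ omegaStarLT)
    (fun x => match x with
      | none => t
      | some (n, i) => if i = 0 then p n else q n) (vRel_total omegaStarLT_total) ?_
  rintro (_ | ⟨n, i⟩) (_ | ⟨m, j⟩)
  · show vRel omegaStarLT none none ↔ r t t
    simpa [vRel] using hT.1 t
  · show vRel omegaStarLT none (some (m, j)) ↔ _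
    fin_cases j
    · simpa [vRel] using htp m
    · simpa [vRel] using asymm_of_r hT (hqt m)
  · show vRel omegaStarLT (some (n, i)) none ↔ _
    fin_cases i
    · simpa [vRel] using asymm_of_r hT (htp n)
    · simpa [vRel] using hqt n
  · show vRel omegaStarLT (some (n, i)) (some (m, j)) ↔ _
    fin_cases i <;> fin_cases j <;>
      simp only [vRel, omegaStarLT] <;> simp [cpp, cqq, cpq n m, cqp n m] <;> omega

/-- C3 lemma, ascending blocks of 3-cycles give `C3[ω]`. -/
lemma c3lemF (hT : IsTournament r) (a b c : ℕ → V)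
    (hab : ∀ k, r (a k) (b k)) (hbc : ∀ k, r (b k) (c k)) (hca : ∀ k, r (c k) (a k))
    (hcr : ∀ i j, i < j → (r (a i) (a j) ∧ r (a i) (b j) ∧ r (a i) (c j)) ∧
      (r (b i) (a j) ∧ r (b i) (b j) ∧ r (b i) (c j)) ∧
      (r (c i) (a j) ∧ r (c i) (b j) ∧ r (c i) (c j))) : MemB r := by
  classical
  have caa := char_lt hT (fun i j h => (hcr i j h).1.1)
  have cbb := char_lt hT (fun i j h => (hcr i j h).2.1.2.1)
  have ccc := char_lt hT (fun i j h => (hcr i j h).2.2.2.2)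
  have cab : ∀ i j, r (a i) (b j) ↔ i ≤ j := char_split hT (P := fun i j => i ≤ j)
    (fun i j h => by rcases eq_or_lt_of_le h with h' | h'
                     · exact h' ▸ hab i
                     · exact (hcr i j h').1.2.1)
    (fun i j h => (hcr j i (not_le.mp h)).2.1.1)
  have cbc : ∀ i j, r (b i) (c j) ↔ i ≤ j := char_split hT (P := fun i j => i ≤ j)
    (fun i j h => by rcases eq_or_lt_of_le h with h' | h'
                     · exact h' ▸ hbc i
                     · exact (hcr i j h').2.1.2.2)
    (fun i j h => (hcr j i (not_le.mp h)).2.2.2.1)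
  have cca : ∀ i j, r (c i) (a j) ↔ i ≤ j := char_split hT (P := fun i j => i ≤ j)
    (fun i j h => by rcases eq_or_lt_of_le h with h' | h'
                     · exact h' ▸ hca i
                     · exact (hcr i j h').2.2.1)
    (fun i j h => (hcr j i (not_le.mp h)).1.2.2)
  have cba : ∀ i j, r (b i) (a j) ↔ i < j := char_split hT (P := fun i j => i < j)
    (fun i j h => (hcr i j h).2.1.1)
    (fun i j h => by rcases eq_or_lt_of_le (not_lt.mp h) with h' | h'
                     · exact h' ▸ hab j
                     · exact (hcr j i h').1.2.1)
  have ccb : ∀ i j, r (c i) (b j) ↔ i < j := char_split hT (P := fun i j => i < j)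
    (fun i j h => (hcr i j h).2.2.2.1)
    (fun i j h => by rcases eq_or_lt_of_le (not_lt.mp h) with h' | h'
                     · exact h' ▸ hbc j
                     · exact (hcr j i h').2.1.2.2)
  have cac : ∀ i j, r (a i) (c j) ↔ i < j := char_split hT (P := fun i j => i < j)
    (fun i j h => (hcr i j h).1.2.2)
    (fun i j h => by rcases eq_or_lt_of_le (not_lt.mp h) with h' | h'
                     · exact h' ▸ hca j
                     · exact (hcr j i h').2.2.1)
  refine ⟨c3Tour ℕ omegaLT, by simp [frakB], ?_⟩
  refine embeds_of_rel hT (S := c3Tour ℕ omegaLT)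
    (fun p => if p.2 = 0 then a p.1 else if p.2 = 1 then b p.1 else c p.1)
    (c3Rel_total omegaLT_total) ?_
  rintro ⟨n, i⟩ ⟨m, j⟩
  fin_cases i <;> fin_cases j <;>
    simp only [c3Tour, c3Rel, omegaLT] <;>
    simp [caa, cbb, ccc, cab n m, cbc n m, cca n m, cba n m, ccb n m, cac n m] <;> omega

/-- C3 lemma, descending blocks of 3-cycles give `C3[ω*]`. -/
lemma c3lemB (hT : IsTournament r) (a b c : ℕ → V)
    (hab : ∀ k, r (a k) (b k)) (hbc : ∀ k, r (b k) (c k)) (hca : ∀ k, r (c k) (a k))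
    (hcr : ∀ i j, i < j → (r (a j) (a i) ∧ r (a j) (b i) ∧ r (a j) (c i)) ∧
      (r (b j) (a i) ∧ r (b j) (b i) ∧ r (b j) (c i)) ∧
      (r (c j) (a i) ∧ r (c j) (b i) ∧ r (c j) (c i))) : MemB r := by
  classical
  have caa := char_gt hT (fun i j h => (hcr i j h).1.1)
  have cbb := char_gt hT (fun i j h => (hcr i j h).2.1.2.1)
  have ccc := char_gt hT (fun i j h => (hcr i j h).2.2.2.2)
  have cab : ∀ i j, r (a i) (b j) ↔ j ≤ i := char_split hT (P := fun i j => j ≤ i)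
    (fun i j h => by rcases eq_or_lt_of_le h with h' | h'
                     · exact h' ▸ hab i
                     · exact (hcr j i h').1.2.1)
    (fun i j h => (hcr i j (not_le.mp h)).2.1.1)
  have cbc : ∀ i j, r (b i) (c j) ↔ j ≤ i := char_split hT (P := fun i j => j ≤ i)
    (fun i j h => by rcases eq_or_lt_of_le h with h' | h'
                     · exact h' ▸ hbc i
                     · exact (hcr j i h').2.1.2.2)
    (fun i j h => (hcr i j (not_le.mp h)).2.2.2.1)
  have cca : ∀ i j, r (c i) (a j) ↔ j ≤ i := char_split hT (P := fun i j => j ≤ i)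
    (fun i j h => by rcases eq_or_lt_of_le h with h' | h'
                     · exact h' ▸ hca i
                     · exact (hcr j i h').2.2.1)
    (fun i j h => (hcr i j (not_le.mp h)).1.2.2)
  have cba : ∀ i j, r (b i) (a j) ↔ j < i := char_split hT (P := fun i j => j < i)
    (fun i j h => (hcr j i h).2.1.1)
    (fun i j h => by rcases eq_or_lt_of_le (not_lt.mp h) with h' | h'
                     · exact h' ▸ hab j
                     · exact (hcr i j h').1.2.1)
  have ccb : ∀ i j, r (c i) (b j) ↔ j < i := char_split hT (P := fun i j => j < i)
    (fun i j h => (hcr j i h).2.2.2.1)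
    (fun i j h => by rcases eq_or_lt_of_le (not_lt.mp h) with h' | h'
                     · exact h' ▸ hbc j
                     · exact (hcr i j h').2.1.2.2)
  have cac : ∀ i j, r (a i) (c j) ↔ j < i := char_split hT (P := fun i j => j < i)
    (fun i j h => (hcr j i h).1.2.2)
    (fun i j h => by rcases eq_or_lt_of_le (not_lt.mp h) with h' | h'
                     · exact h' ▸ hca j
                     · exact (hcr i j h').2.2.1)
  refine ⟨c3Tour ℕ omegaStarLT, by simp [frakB], ?_⟩
  refine embeds_of_rel hT (S := c3Tour ℕ omegaStarLT)
    (fun p => if p.2 = 0 then a p.1 else if p.2 = 1 then b p.1 else c p.1)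
    (c3Rel_total omegaStarLT_total) ?_
  rintro ⟨n, i⟩ ⟨m, j⟩
  fin_cases i <;> fin_cases j <;>
    simp only [c3Tour, c3Rel, omegaStarLT] <;>
    simp [caa, cbb, ccc, cab n m, cbc n m, cca n m, cba n m, ccb n m, cac n m] <;> omega

end Build2


section Flip

variable {V : Type u} {r : V → V → Prop}

lemma transfer_t_o (hT : IsTournament r)
    (h : (tTour ℕ omegaLT).EmbedsIn (fun x y => r y x)) : MemB r := by
  obtain ⟨f, -, hf⟩ := h
  exact patB_TTF hT (fun k => f (k,1)) (fun k => f (k,0))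
    (fun i j hij => (hf (i,1) (j,1)).mp (Or.inr (Or.inr (Or.inl ⟨rfl, rfl, hij⟩))))
    (fun i => (hf (i,0) (i,1)).mp (Or.inr (Or.inl ⟨rfl, rfl, rfl⟩)))
    (fun i j hij => (hf (j,1) (i,0)).mp (Or.inr (Or.inr (Or.inr (Or.inl ⟨rfl, rfl, hij⟩)))))
    (fun i j hij => (hf (j,0) (i,1)).mp (Or.inr (Or.inr (Or.inr (Or.inr ⟨rfl, rfl, hij⟩)))))
    (fun i j hij => (hf (i,0) (j,0)).mp (Or.inl ⟨rfl, rfl, hij⟩))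

lemma transfer_t_os (hT : IsTournament r)
    (h : (tTour ℕ omegaStarLT).EmbedsIn (fun x y => r y x)) : MemB r := by
  obtain ⟨f, -, hf⟩ := h
  exact patF_FFT hT (fun k => f (k,1)) (fun k => f (k,0))
    (fun i j hij => (hf (j,1) (i,1)).mp (Or.inr (Or.inr (Or.inl ⟨rfl, rfl, hij⟩))))
    (fun i => (hf (i,0) (i,1)).mp (Or.inr (Or.inl ⟨rfl, rfl, rfl⟩)))
    (fun i j hij => (hf (i,0) (j,1)).mp (Or.inr (Or.inr (Or.inr (Or.inr ⟨rfl, rfl, hij⟩)))))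
    (fun i j hij => (hf (i,1) (j,0)).mp (Or.inr (Or.inr (Or.inr (Or.inl ⟨rfl, rfl, hij⟩)))))
    (fun i j hij => (hf (j,0) (i,0)).mp (Or.inl ⟨rfl, rfl, hij⟩))

lemma transfer_u_o (hT : IsTournament r)
    (h : (uTour ℕ omegaLT).EmbedsIn (fun x y => r y x)) : MemB r := by
  obtain ⟨f, -, hf⟩ := h
  exact patF_FFF hT (fun k => f (k,1)) (fun k => f (k,0))
    (fun i j hij => (hf (j,1) (i,1)).mp (Or.inr (Or.inr (Or.inl ⟨rfl, rfl, hij⟩))))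
    (fun i => (hf (i,0) (i,1)).mp (Or.inr (Or.inl ⟨rfl, rfl, rfl⟩)))
    (fun i j hij => (hf (i,0) (j,1)).mp (Or.inr (Or.inr (Or.inr (Or.inl ⟨rfl, rfl, hij⟩)))))
    (fun i j hij => (hf (i,1) (j,0)).mp (Or.inr (Or.inr (Or.inr (Or.inr ⟨rfl, rfl, hij⟩)))))
    (fun i j hij => (hf (i,0) (j,0)).mp (Or.inl ⟨rfl, rfl, hij⟩))

lemma transfer_u_os (hT : IsTournament r)
    (h : (uTour ℕ omegaStarLT).EmbedsIn (fun x y => r y x)) : MemB r := by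
  obtain ⟨f, -, hf⟩ := h
  exact patB_TTT hT (fun k => f (k,1)) (fun k => f (k,0))
    (fun i j hij => (hf (i,1) (j,1)).mp (Or.inr (Or.inr (Or.inl ⟨rfl, rfl, hij⟩))))
    (fun i => (hf (i,0) (i,1)).mp (Or.inr (Or.inl ⟨rfl, rfl, rfl⟩)))
    (fun i j hij => (hf (j,1) (i,0)).mp (Or.inr (Or.inr (Or.inr (Or.inr ⟨rfl, rfl, hij⟩)))))
    (fun i j hij => (hf (j,0) (i,1)).mp (Or.inr (Or.inr (Or.inr (Or.inl ⟨rfl, rfl, hij⟩)))))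
    (fun i j hij => (hf (j,0) (i,0)).mp (Or.inl ⟨rfl, rfl, hij⟩))

lemma transfer_h_o (hT : IsTournament r)
    (h : (hTour ℕ omegaLT).EmbedsIn (fun x y => r y x)) : MemB r := by
  obtain ⟨f, -, hf⟩ := h
  exact patB_TFF hT (fun k => f (k,1)) (fun k => f (k,0))
    (fun i j hij => (hf (i,1) (j,1)).mp (Or.inr (Or.inr (Or.inl ⟨rfl, rfl, hij⟩))))
    (fun i => (hf (i,0) (i,1)).mp (Or.inr (Or.inl ⟨rfl, rfl, rfl⟩)))
    (fun i j hij => (hf (j,1) (i,0)).mp (Or.inr (Or.inr (Or.inr (Or.inl ⟨rfl, rfl, hij⟩)))))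
    (fun i j hij => (hf (i,1) (j,0)).mp (Or.inr (Or.inr (Or.inr (Or.inr ⟨rfl, rfl, hij⟩)))))
    (fun i j hij => (hf (i,0) (j,0)).mp (Or.inl ⟨rfl, rfl, hij⟩))

lemma transfer_h_os (hT : IsTournament r)
    (h : (hTour ℕ omegaStarLT).EmbedsIn (fun x y => r y x)) : MemB r := by
  obtain ⟨f, -, hf⟩ := h
  exact patF_TFT hT (fun k => f (k,1)) (fun k => f (k,0))
    (fun i j hij => (hf (j,1) (i,1)).mp (Or.inr (Or.inr (Or.inl ⟨rfl, rfl, hij⟩))))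
    (fun i => (hf (i,0) (i,1)).mp (Or.inr (Or.inl ⟨rfl, rfl, rfl⟩)))
    (fun i j hij => (hf (j,1) (i,0)).mp (Or.inr (Or.inr (Or.inr (Or.inr ⟨rfl, rfl, hij⟩)))))
    (fun i j hij => (hf (i,1) (j,0)).mp (Or.inr (Or.inr (Or.inr (Or.inl ⟨rfl, rfl, hij⟩)))))
    (fun i j hij => (hf (j,0) (i,0)).mp (Or.inl ⟨rfl, rfl, hij⟩))

lemma transfer_k_o (hT : IsTournament r)
    (h : (kTour ℕ omegaLT).EmbedsIn (fun x y => r y x)) : MemB r := by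
  obtain ⟨f, -, hf⟩ := h
  exact patF_TFF hT (fun k => f (k,1)) (fun k => f (k,0))
    (fun i j hij => (hf (j,1) (i,1)).mp (Or.inr (Or.inr (Or.inl ⟨rfl, rfl, hij⟩))))
    (fun i => (hf (i,0) (i,1)).mp (Or.inr (Or.inl ⟨rfl, rfl, rfl⟩)))
    (fun i j hij => (hf (j,1) (i,0)).mp (Or.inr (Or.inr (Or.inr (Or.inl ⟨rfl, rfl, hij⟩)))))
    (fun i j hij => (hf (i,1) (j,0)).mp (Or.inr (Or.inr (Or.inr (Or.inr ⟨rfl, rfl, hij⟩)))))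
    (fun i j hij => (hf (i,0) (j,0)).mp (Or.inl ⟨rfl, rfl, hij⟩))

lemma transfer_k_os (hT : IsTournament r)
    (h : (kTour ℕ omegaStarLT).EmbedsIn (fun x y => r y x)) : MemB r := by
  obtain ⟨f, -, hf⟩ := h
  exact patB_TFT hT (fun k => f (k,1)) (fun k => f (k,0))
    (fun i j hij => (hf (i,1) (j,1)).mp (Or.inr (Or.inr (Or.inl ⟨rfl, rfl, hij⟩))))
    (fun i => (hf (i,0) (i,1)).mp (Or.inr (Or.inl ⟨rfl, rfl, rfl⟩)))
    (fun i j hij => (hf (j,1) (i,0)).mp (Or.inr (Or.inr (Or.inr (Or.inr ⟨rfl, rfl, hij⟩)))))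
    (fun i j hij => (hf (i,1) (j,0)).mp (Or.inr (Or.inr (Or.inr (Or.inl ⟨rfl, rfl, hij⟩)))))
    (fun i j hij => (hf (j,0) (i,0)).mp (Or.inl ⟨rfl, rfl, hij⟩))

lemma transfer_v_o (hT : IsTournament r)
    (h : (vTour ℕ omegaLT).EmbedsIn (fun x y => r y x)) : MemB r := by
  obtain ⟨f, -, hf⟩ := h
  exact vlemB hT (f none) (fun k => f (some (k,1))) (fun k => f (some (k,0)))
    (fun i => (hf (some (i,0)) (some (i,1))).mp (Or.inr ⟨rfl, rfl, rfl⟩))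
    (fun i j hij => ⟨(hf (some (i,1)) (some (j,1))).mp (Or.inl hij),
      (hf (some (i,0)) (some (j,1))).mp (Or.inl hij),
      (hf (some (i,1)) (some (j,0))).mp (Or.inl hij),
      (hf (some (i,0)) (some (j,0))).mp (Or.inl hij)⟩)
    (fun i => (hf (some (i,1)) none).mp rfl)
    (fun i => (hf none (some (i,0))).mp rfl)

lemma transfer_v_os (hT : IsTournament r)
    (h : (vTour ℕ omegaStarLT).EmbedsIn (fun x y => r y x)) : MemB r := by
  obtain ⟨f, -, hf⟩ := h
  exact vlemF hT (f none) (fun k => f (some (k,1))) (fun k => f (some (k,0)))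
    (fun i => (hf (some (i,0)) (some (i,1))).mp (Or.inr ⟨rfl, rfl, rfl⟩))
    (fun i j hij => ⟨(hf (some (j,1)) (some (i,1))).mp (Or.inl hij),
      (hf (some (j,0)) (some (i,1))).mp (Or.inl hij),
      (hf (some (j,1)) (some (i,0))).mp (Or.inl hij),
      (hf (some (j,0)) (some (i,0))).mp (Or.inl hij)⟩)
    (fun i => (hf (some (i,1)) none).mp rfl)
    (fun i => (hf none (some (i,0))).mp rfl)

lemma transfer_c3_o (hT : IsTournament r)
    (h : (c3Tour ℕ omegaLT).EmbedsIn (fun x y => r y x)) : MemB r := by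
  obtain ⟨f, -, hf⟩ := h
  exact c3lemB hT (fun k => f (k,0)) (fun k => f (k,2)) (fun k => f (k,1))
    (fun k => (hf (k,2) (k,0)).mp (Or.inr ⟨rfl, by simp⟩))
    (fun k => (hf (k,1) (k,2)).mp (Or.inr ⟨rfl, by simp⟩))
    (fun k => (hf (k,0) (k,1)).mp (Or.inr ⟨rfl, by simp⟩))
    (fun i j hij =>
      ⟨⟨(hf (i,0) (j,0)).mp (Or.inl hij), (hf (i,2) (j,0)).mp (Or.inl hij),
        (hf (i,1) (j,0)).mp (Or.inl hij)⟩,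
       ⟨(hf (i,0) (j,2)).mp (Or.inl hij), (hf (i,2) (j,2)).mp (Or.inl hij),
        (hf (i,1) (j,2)).mp (Or.inl hij)⟩,
       ⟨(hf (i,0) (j,1)).mp (Or.inl hij), (hf (i,2) (j,1)).mp (Or.inl hij),
        (hf (i,1) (j,1)).mp (Or.inl hij)⟩⟩)

lemma transfer_c3_os (hT : IsTournament r)
    (h : (c3Tour ℕ omegaStarLT).EmbedsIn (fun x y => r y x)) : MemB r := by
  obtain ⟨f, -, hf⟩ := h
  exact c3lemF hT (fun k => f (k,0)) (fun k => f (k,2)) (fun k => f (k,1))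
    (fun k => (hf (k,2) (k,0)).mp (Or.inr ⟨rfl, by simp⟩))
    (fun k => (hf (k,1) (k,2)).mp (Or.inr ⟨rfl, by simp⟩))
    (fun k => (hf (k,0) (k,1)).mp (Or.inr ⟨rfl, by simp⟩))
    (fun i j hij =>
      ⟨⟨(hf (j,0) (i,0)).mp (Or.inl hij), (hf (j,2) (i,0)).mp (Or.inl hij),
        (hf (j,1) (i,0)).mp (Or.inl hij)⟩,
       ⟨(hf (j,0) (i,2)).mp (Or.inl hij), (hf (j,2) (i,2)).mp (Or.inl hij),
        (hf (j,1) (i,2)).mp (Or.inl hij)⟩,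
       ⟨(hf (j,0) (i,1)).mp (Or.inl hij), (hf (j,2) (i,1)).mp (Or.inl hij),
        (hf (j,1) (i,1)).mp (Or.inl hij)⟩⟩)

/-- transfer a member of `frakB` embedded in the reversed tournament back. -/
lemma MemB_of_flip (hT : IsTournament r) (h : MemB (fun x y => r y x)) : MemB r := by
  obtain ⟨S, hS, hemb⟩ := h
  simp only [frakB, List.mem_cons, List.not_mem_nil, or_false] at hS
  rcases hS with rfl|rfl|rfl|rfl|rfl|rfl|rfl|rfl|rfl|rfl|rfl|rfl
  · exact transfer_c3_o hT hemb
  · exact transfer_v_o hT hemb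
  · exact transfer_t_o hT hemb
  · exact transfer_u_o hT hemb
  · exact transfer_h_o hT hemb
  · exact transfer_k_o hT hemb
  · exact transfer_c3_os hT hemb
  · exact transfer_v_os hT hemb
  · exact transfer_t_os hT hemb
  · exact transfer_u_os hT hemb
  · exact transfer_h_os hT hemb
  · exact transfer_k_os hT hemb

lemma flip_isTournament (hT : IsTournament r) : IsTournament (fun x y => r y x) :=
  ⟨fun x => hT.1 x, fun x y hne => by
    have := hT.2 y x (Ne.symm hne); tauto⟩

end Flip


section Mach

variable {V : Type u} {r : V → V → Prop}

/-- Case-b machine, ascending chain: an ascending sequence of pairs `(u,v)` on a chain,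
with a 3-cycle `u→v→w→u` on each block and Ramsey-homogeneous bits, yields a member. -/
lemma caseBF (hT : IsTournament r) (u v w : ℕ → V)
    (huv : ∀ i, r (u i) (v i)) (hvw : ∀ i, r (v i) (w i)) (hwu : ∀ i, r (w i) (u i))
    (hch : ∀ i j, i < j → r (u i) (u j) ∧ r (u i) (v j) ∧ r (v i) (u j) ∧ r (v i) (v j))
    (hne : ∀ i j, w i ≠ u j ∧ w i ≠ v j ∧ (i ≠ j → w i ≠ w j))
    (b1 b2 b3 b4 b5 : Prop)
    (h1 : ∀ i j, i < j → (r (w i) (u j) ↔ b1)) (h2 : ∀ i j, i < j → (r (u i) (w j) ↔ b2))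
    (h3 : ∀ i j, i < j → (r (w i) (v j) ↔ b3)) (h4 : ∀ i j, i < j → (r (v i) (w j) ↔ b4))
    (h5 : ∀ i j, i < j → (r (w i) (w j) ↔ b5)) : MemB r := by
  classical
  -- positive forms
  have p1 : b1 → ∀ i j, i < j → r (w i) (u j) := fun hb i j hij => (h1 i j hij).mpr hb
  have n1 : ¬ b1 → ∀ i j, i < j → r (u j) (w i) := fun hb i j hij =>
    r_of_not_r hT (fun e => (hne i j).1 e.symm) (fun h => hb ((h1 i j hij).mp h))
  have p2 : b2 → ∀ i j, i < j → r (u i) (w j) := fun hb i j hij => (h2 i j hij).mpr hb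
  have n2 : ¬ b2 → ∀ i j, i < j → r (w j) (u i) := fun hb i j hij =>
    r_of_not_r hT (fun e => (hne j i).1 e) (fun h => hb ((h2 i j hij).mp h))
  have p3 : b3 → ∀ i j, i < j → r (w i) (v j) := fun hb i j hij => (h3 i j hij).mpr hb
  have n3 : ¬ b3 → ∀ i j, i < j → r (v j) (w i) := fun hb i j hij =>
    r_of_not_r hT (fun e => (hne i j).2.1 (e.symm)) (fun h => hb ((h3 i j hij).mp h))
  have p4 : b4 → ∀ i j, i < j → r (v i) (w j) := fun hb i j hij => (h4 i j hij).mpr hb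
  have n4 : ¬ b4 → ∀ i j, i < j → r (w j) (v i) := fun hb i j hij =>
    r_of_not_r hT (fun e => (hne j i).2.1 e) (fun h => hb ((h4 i j hij).mp h))
  have p5 : b5 → ∀ i j, i < j → r (w i) (w j) := fun hb i j hij => (h5 i j hij).mpr hb
  have n5 : ¬ b5 → ∀ i j, i < j → r (w j) (w i) := fun hb i j hij =>
    r_of_not_r hT (fun e => (hne j i).2.2 (Nat.ne_of_gt hij) e) (fun h => hb ((h5 i j hij).mp h))
  by_cases hb3 : b3
  · by_cases hb4 : b4
    · by_cases hb5 : b5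
      · -- (T,T,T) on (v,w) pairing
        by_cases hb1 : b1
        · by_cases hb2 : b2
          · -- all five bits true: C3
            exact c3lemF hT u v w huv hvw hwu (fun i j hij =>
              ⟨⟨(hch i j hij).1, (hch i j hij).2.1, p2 hb2 i j hij⟩,
               ⟨(hch i j hij).2.2.1, (hch i j hij).2.2.2, p4 hb4 i j hij⟩,
               ⟨p1 hb1 i j hij, p3 hb3 i j hij, p5 hb5 i j hij⟩⟩)
          · -- b2 false : V with apex u 0 and pairs (v (k+1), w (k+1))
            exact vlemF hT (u 0) (fun k => v (k+1)) (fun k => w (k+1))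
              (fun i => hvw (i+1))
              (fun i j hij => ⟨(hch (i+1) (j+1) (by omega)).2.2.2,
                p4 hb4 (i+1) (j+1) (by omega), p3 hb3 (i+1) (j+1) (by omega),
                p5 hb5 (i+1) (j+1) (by omega)⟩)
              (fun i => (hch 0 (i+1) (by omega)).2.1)
              (fun i => n2 hb2 0 (i+1) (by omega))
        · -- b1 false : (w,u) pairing
          by_cases hb5' : b5
          · by_cases hb2 : b2
            · exact patF_TFT hT w u (p5 hb5' ) hwu (p2 hb2) (n1 hb1)
                (fun i j hij => (hch i j hij).1)
            · exact patF_FFT hT w u (p5 hb5') hwu (n2 hb2) (n1 hb1)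
                (fun i j hij => (hch i j hij).1)
          · exact absurd hb5 hb5'
      · -- (T,T,F) on (v,w): U
        exact patF_TTF hT v w (fun i j hij => (hch i j hij).2.2.2) hvw
          (p3 hb3) (p4 hb4) (n5 hb5)
    · by_cases hb5 : b5
      · -- (T,F,T): H
        exact patF_TFT hT v w (fun i j hij => (hch i j hij).2.2.2) hvw
          (p3 hb3) (n4 hb4) (p5 hb5)
      · -- (T,F,F): K
        exact patF_TFF hT v w (fun i j hij => (hch i j hij).2.2.2) hvw
          (p3 hb3) (n4 hb4) (n5 hb5)
  · -- b3 false
    by_cases hb4 : b4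
    · -- (F,T,*) : v's beat all w's
      by_cases hb1 : b1
      · -- V with apex w 0, pairs (u (k+1), v (k+1))
        exact vlemF hT (w 0) (fun k => u (k+1)) (fun k => v (k+1))
          (fun i => huv (i+1))
          (fun i j hij => ⟨(hch (i+1) (j+1) (by omega)).1, (hch (i+1) (j+1) (by omega)).2.1,
            (hch (i+1) (j+1) (by omega)).2.2.1, (hch (i+1) (j+1) (by omega)).2.2.2⟩)
          (fun i => p1 hb1 0 (i+1) (by omega))
          (fun i => n3 hb3 0 (i+1) (by omega))
      · -- b1 false : (w,u) pairing again
        by_cases hb5 : b5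
        · by_cases hb2 : b2
          · exact patF_TFT hT w u (p5 hb5) hwu (p2 hb2) (n1 hb1)
              (fun i j hij => (hch i j hij).1)
          · exact patF_FFT hT w u (p5 hb5) hwu (n2 hb2) (n1 hb1)
              (fun i j hij => (hch i j hij).1)
        · by_cases hb2 : b2
          · exact patB_TFT hT w u (n5 hb5) hwu (p2 hb2) (n1 hb1)
              (fun i j hij => (hch i j hij).1)
          · exact patB_FFT hT w u (n5 hb5) hwu (n2 hb2) (n1 hb1)
              (fun i j hij => (hch i j hij).1)
    · by_cases hb5 : b5
      · -- (F,F,T): T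
        exact patF_FFT hT v w (fun i j hij => (hch i j hij).2.2.2) hvw
          (n3 hb3) (n4 hb4) (p5 hb5)
      · -- (F,F,F): U*
        exact patF_FFF hT v w (fun i j hij => (hch i j hij).2.2.2) hvw
          (n3 hb3) (n4 hb4) (n5 hb5)

end Mach


section Mach2

variable {V : Type u} {r : V → V → Prop}

/-- Case-b machine, descending chain (wrapper via the reversed tournament). -/
lemma caseBB (hT : IsTournament r) (u v w : ℕ → V)
    (huv : ∀ i, r (u i) (v i)) (hvw : ∀ i, r (v i) (w i)) (hwu : ∀ i, r (w i) (u i))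
    (hch : ∀ i j, i < j → r (u j) (u i) ∧ r (u j) (v i) ∧ r (v j) (u i) ∧ r (v j) (v i))
    (hne : ∀ i j, w i ≠ u j ∧ w i ≠ v j ∧ (i ≠ j → w i ≠ w j))
    (b1 b2 b3 b4 b5 : Prop)
    (h1 : ∀ i j, i < j → (r (v j) (w i) ↔ b1)) (h2 : ∀ i j, i < j → (r (w j) (v i) ↔ b2))
    (h3 : ∀ i j, i < j → (r (u j) (w i) ↔ b3)) (h4 : ∀ i j, i < j → (r (w j) (u i) ↔ b4))
    (h5 : ∀ i j, i < j → (r (w j) (w i) ↔ b5)) : MemB r := by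
  apply MemB_of_flip hT
  exact caseBF (flip_isTournament hT) v u w
    (fun i => huv i) (fun i => hwu i) (fun i => hvw i)
    (fun i j hij => ⟨(hch i j hij).2.2.2, (hch i j hij).2.1,
      (hch i j hij).2.2.1, (hch i j hij).1⟩)
    (fun i j => ⟨(hne i j).2.1, (hne i j).1, (hne i j).2.2⟩)
    b1 b2 b3 b4 b5 h1 h2 h3 h4 h5

/-- Case-a machine, ascending chain: blocks `u→w→v` inserted consistently in each window;
either a member is found or all five bits are true (full consistent insertion). -/
lemma caseAF (hT : IsTournament r) (u v w : ℕ → V)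
    (huv : ∀ i, r (u i) (v i)) (huw : ∀ i, r (u i) (w i)) (hwv : ∀ i, r (w i) (v i))
    (hch : ∀ i j, i < j → r (u i) (u j) ∧ r (u i) (v j) ∧ r (v i) (u j) ∧ r (v i) (v j))
    (hne : ∀ i j, w i ≠ u j ∧ w i ≠ v j ∧ (i ≠ j → w i ≠ w j))
    (b1 b2 b3 b4 b5 : Prop)
    (h1 : ∀ i j, i < j → (r (w i) (u j) ↔ b1)) (h2 : ∀ i j, i < j → (r (u i) (w j) ↔ b2))
    (h3 : ∀ i j, i < j → (r (w i) (v j) ↔ b3)) (h4 : ∀ i j, i < j → (r (v i) (w j) ↔ b4))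
    (h5 : ∀ i j, i < j → (r (w i) (w j) ↔ b5)) :
    MemB r ∨ (b1 ∧ b2 ∧ b3 ∧ b4 ∧ b5) := by
  classical
  have p1 : b1 → ∀ i j, i < j → r (w i) (u j) := fun hb i j hij => (h1 i j hij).mpr hb
  have n1 : ¬ b1 → ∀ i j, i < j → r (u j) (w i) := fun hb i j hij =>
    r_of_not_r hT (fun e => (hne i j).1 e.symm) (fun h => hb ((h1 i j hij).mp h))
  have p2 : b2 → ∀ i j, i < j → r (u i) (w j) := fun hb i j hij => (h2 i j hij).mpr hb
  have n2 : ¬ b2 → ∀ i j, i < j → r (w j) (u i) := fun hb i j hij =>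
    r_of_not_r hT (fun e => (hne j i).1 e) (fun h => hb ((h2 i j hij).mp h))
  have p3 : b3 → ∀ i j, i < j → r (w i) (v j) := fun hb i j hij => (h3 i j hij).mpr hb
  have n3 : ¬ b3 → ∀ i j, i < j → r (v j) (w i) := fun hb i j hij =>
    r_of_not_r hT (fun e => (hne i j).2.1 (e.symm)) (fun h => hb ((h3 i j hij).mp h))
  have p4 : b4 → ∀ i j, i < j → r (v i) (w j) := fun hb i j hij => (h4 i j hij).mpr hb
  have n4 : ¬ b4 → ∀ i j, i < j → r (w j) (v i) := fun hb i j hij =>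
    r_of_not_r hT (fun e => (hne j i).2.1 e) (fun h => hb ((h4 i j hij).mp h))
  have p5 : b5 → ∀ i j, i < j → r (w i) (w j) := fun hb i j hij => (h5 i j hij).mpr hb
  have n5 : ¬ b5 → ∀ i j, i < j → r (w j) (w i) := fun hb i j hij =>
    r_of_not_r hT (fun e => (hne j i).2.2 (Nat.ne_of_gt hij) e) (fun h => hb ((h5 i j hij).mp h))
  by_cases hb1 : b1
  · by_cases hb2 : b2
    · by_cases hb5 : b5
      · -- (T,T,T) on (u,w); look at (w,v)
        by_cases hb3 : b3
        · by_cases hb4 : b4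
          · exact Or.inr ⟨hb1, hb2, hb3, hb4, hb5⟩
          · -- V apex v 0, pairs (u (2i+1), w (2i+2))
            refine Or.inl (vlemF hT (v 0) (fun i => u (2*i+1)) (fun i => w (2*i+2))
              (fun i => p2 hb2 _ _ (by omega))
              (fun i j hij => ⟨(hch _ _ (by omega)).1, p2 hb2 _ _ (by omega),
                p1 hb1 _ _ (by omega), p5 hb5 _ _ (by omega)⟩)
              (fun i => (hch 0 _ (by omega)).2.2.1)
              (fun i => n4 hb4 0 _ (by omega)))
        · -- b3 = F
          by_cases hb4 : b4
          · exact Or.inl (patF_TFT hT w v (p5 hb5) hwv (p4 hb4) (n3 hb3)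
              (fun i j hij => (hch i j hij).2.2.2))
          · exact Or.inl (patF_FFT hT w v (p5 hb5) hwv (n4 hb4) (n3 hb3)
              (fun i j hij => (hch i j hij).2.2.2))
      · -- (T,T,F) on (u,w): U
        exact Or.inl (patF_TTF hT u w (fun i j hij => (hch i j hij).1) huw
          (p1 hb1) (p2 hb2) (n5 hb5))
    · by_cases hb5 : b5
      · exact Or.inl (patF_TFT hT u w (fun i j hij => (hch i j hij).1) huw
          (p1 hb1) (n2 hb2) (p5 hb5))
      · exact Or.inl (patF_TFF hT u w (fun i j hij => (hch i j hij).1) huw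
          (p1 hb1) (n2 hb2) (n5 hb5))
  · -- b1 = F
    by_cases hb2 : b2
    · -- (F,T,*) on (u,w): all u's beat all w's; use (w,v) / V
      by_cases hb3 : b3
      · -- V apex w 0, pairs (v (k+1), u (k+2))
        refine Or.inl (vlemF hT (w 0) (fun k => v (k+1)) (fun k => u (k+2))
          (fun i => (hch _ _ (by omega)).2.2.1)
          (fun i j hij => ⟨(hch _ _ (by omega)).2.2.2, (hch _ _ (by omega)).2.2.1, ?_,
            (hch _ _ (by omega)).1⟩)
          (fun i => p3 hb3 0 _ (by omega))
          (fun i => n1 hb1 0 _ (by omega)))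
        show r (u (i+2)) (v (j+1))
        rcases Nat.lt_or_ge (i+2) (j+1) with h | h
        · exact (hch _ _ h).2.1
        · have e : i + 2 = j + 1 := by omega
          rw [e]; exact huv (j+1)
      · -- b3 = F : (w,v) pairing with b4,b5 splits
        by_cases hb5 : b5
        · by_cases hb4 : b4
          · exact Or.inl (patF_TFT hT w v (p5 hb5) hwv (p4 hb4) (n3 hb3)
              (fun i j hij => (hch i j hij).2.2.2))
          · exact Or.inl (patF_FFT hT w v (p5 hb5) hwv (n4 hb4) (n3 hb3)
              (fun i j hij => (hch i j hij).2.2.2))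
        · by_cases hb4 : b4
          · exact Or.inl (patB_TFT hT w v (n5 hb5) hwv (p4 hb4) (n3 hb3)
              (fun i j hij => (hch i j hij).2.2.2))
          · exact Or.inl (patB_FFT hT w v (n5 hb5) hwv (n4 hb4) (n3 hb3)
              (fun i j hij => (hch i j hij).2.2.2))
    · -- (F,F,b5) on (u,w)
      by_cases hb5 : b5
      · exact Or.inl (patF_FFT hT u w (fun i j hij => (hch i j hij).1) huw
          (n1 hb1) (n2 hb2) (p5 hb5))
      · exact Or.inl (patF_FFF hT u w (fun i j hij => (hch i j hij).1) huw
          (n1 hb1) (n2 hb2) (n5 hb5))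

/-- Case-a machine, descending chain. -/
lemma caseAB (hT : IsTournament r) (u v w : ℕ → V)
    (huv : ∀ i, r (u i) (v i)) (huw : ∀ i, r (u i) (w i)) (hwv : ∀ i, r (w i) (v i))
    (hch : ∀ i j, i < j → r (u j) (u i) ∧ r (u j) (v i) ∧ r (v j) (u i) ∧ r (v j) (v i))
    (hne : ∀ i j, w i ≠ u j ∧ w i ≠ v j ∧ (i ≠ j → w i ≠ w j))
    (b1 b2 b3 b4 b5 : Prop)
    (h1 : ∀ i j, i < j → (r (v j) (w i) ↔ b1)) (h2 : ∀ i j, i < j → (r (w j) (v i) ↔ b2))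
    (h3 : ∀ i j, i < j → (r (u j) (w i) ↔ b3)) (h4 : ∀ i j, i < j → (r (w j) (u i) ↔ b4))
    (h5 : ∀ i j, i < j → (r (w j) (w i) ↔ b5)) :
    MemB r ∨ (b1 ∧ b2 ∧ b3 ∧ b4 ∧ b5) := by
  rcases caseAF (flip_isTournament hT) v u w
    (fun i => huv i) (fun i => hwv i) (fun i => huw i)
    (fun i j hij => ⟨(hch i j hij).2.2.2, (hch i j hij).2.1,
      (hch i j hij).2.2.1, (hch i j hij).1⟩)
    (fun i j => ⟨(hne i j).2.1, (hne i j).1, (hne i j).2.2⟩)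
    b1 b2 b3 b4 b5 h1 h2 h3 h4 h5 with h | h
  · exact Or.inl (MemB_of_flip hT h)
  · exact Or.inr h

end Mach2


section PairMachine

variable {V : Type u} {r : V → V → Prop}

lemma iff_of_decide_eq {p : Prop} [Decidable p] {b : Bool} (h : decide p = b) : p ↔ b = true := by
  subst h; simp

/-- The pair machine: a chain with one separator for each consecutive pair `(x (2k), x (2k+1))`
either yields a member of `frakB`, or a subfamily where the separators insert consistently. -/
lemma pairMachine (hT : IsTournament r) (x z : ℕ → V)
    (hx : ∀ i j, i < j → r (x i) (x j))
    (hzx : ∀ k m, z k ≠ x m) (hzz : ∀ k m, k ≠ m → z k ≠ z m)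
    (hsep : ∀ k, (r (x (2*k)) (z k) ∧ r (z k) (x (2*k+1))) ∨
      (r (x (2*k+1)) (z k) ∧ r (z k) (x (2*k)))) :
    MemB r ∨ ∃ φ : ℕ → ℕ, StrictMono φ ∧
      (∀ i, r (x (2*φ i)) (z (φ i)) ∧ r (z (φ i)) (x (2*φ i+1))) ∧
      (∀ i j, i < j → r (z (φ i)) (x (2*φ j)) ∧ r (x (2*φ i)) (z (φ j)) ∧
        r (z (φ i)) (x (2*φ j+1)) ∧ r (x (2*φ i+1)) (z (φ j)) ∧ r (z (φ i)) (z (φ j))) := by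
  classical
  obtain ⟨fl, φ₀, hφ₀, hfl⟩ := pigeon_subseq (fun k => decide (r (x (2*k)) (z k)))
  have flavA : fl = true → ∀ n, r (x (2*φ₀ n)) (z (φ₀ n)) ∧ r (z (φ₀ n)) (x (2*φ₀ n+1)) := by
    intro hf n
    have h := of_decide_eq_true (by rw [hfl n, hf])
    rcases hsep (φ₀ n) with h' | h'
    · exact ⟨h, h'.2⟩
    · exact absurd h (asymm_of_r hT h'.2)
  have flavB : fl = false → ∀ n, r (x (2*φ₀ n+1)) (z (φ₀ n)) ∧ r (z (φ₀ n)) (x (2*φ₀ n)) := by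
    intro hf n
    rcases hsep (φ₀ n) with h' | h'
    · exact absurd (decide_eq_true h'.1) (by rw [hfl n, hf]; simp)
    · exact h'
  obtain ⟨ψ, K, hψ, hc⟩ := ramsey2 (fun i j =>
    (decide (r (z (φ₀ i)) (x (2*φ₀ j))), decide (r (x (2*φ₀ i)) (z (φ₀ j))),
     decide (r (z (φ₀ i)) (x (2*φ₀ j+1))), decide (r (x (2*φ₀ i+1)) (z (φ₀ j))),
     decide (r (z (φ₀ i)) (z (φ₀ j)))))
  set φ : ℕ → ℕ := fun n => φ₀ (ψ n) with hφdef
  have hφ : StrictMono φ := fun a b h => hφ₀ (hψ h)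
  have key : ∀ i j, i < j →
      (r (z (φ i)) (x (2*φ j)) ↔ K.1 = true) ∧ (r (x (2*φ i)) (z (φ j)) ↔ K.2.1 = true) ∧
      (r (z (φ i)) (x (2*φ j+1)) ↔ K.2.2.1 = true) ∧
      (r (x (2*φ i+1)) (z (φ j)) ↔ K.2.2.2.1 = true) ∧
      (r (z (φ i)) (z (φ j)) ↔ K.2.2.2.2 = true) := by
    intro i j hij
    have h := hc i j hij
    exact ⟨iff_of_decide_eq (congrArg (·.1) h), iff_of_decide_eq (congrArg (·.2.1) h),
      iff_of_decide_eq (congrArg (·.2.2.1) h), iff_of_decide_eq (congrArg (·.2.2.2.1) h),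
      iff_of_decide_eq (congrArg (·.2.2.2.2) h)⟩
  have hchain : ∀ i j, i < j → r (x (2*φ i)) (x (2*φ j)) ∧ r (x (2*φ i)) (x (2*φ j+1)) ∧
      r (x (2*φ i+1)) (x (2*φ j)) ∧ r (x (2*φ i+1)) (x (2*φ j+1)) := by
    intro i j hij
    have h2 : φ i < φ j := hφ hij
    exact ⟨hx _ _ (by omega), hx _ _ (by omega), hx _ _ (by omega), hx _ _ (by omega)⟩
  have hne' : ∀ i j, z (φ i) ≠ x (2*φ j) ∧ z (φ i) ≠ x (2*φ j+1) ∧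
      (i ≠ j → z (φ i) ≠ z (φ j)) := fun i j =>
    ⟨hzx _ _, hzx _ _, fun hij => hzz _ _ (fun e => hij (hψ.injective (hφ₀.injective e)))⟩
  cases hfl2 : fl with
  | false =>
    refine Or.inl (caseBF hT (fun i => x (2*φ i)) (fun i => x (2*φ i+1)) (fun i => z (φ i))
      (fun i => hx _ _ (by omega)) (fun i => (flavB hfl2 (ψ i)).1) (fun i => (flavB hfl2 (ψ i)).2)
      hchain hne' (K.1 = true) (K.2.1 = true) (K.2.2.1 = true) (K.2.2.2.1 = true) (K.2.2.2.2 = true)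
      (fun i j hij => (key i j hij).1) (fun i j hij => (key i j hij).2.1)
      (fun i j hij => (key i j hij).2.2.1) (fun i j hij => (key i j hij).2.2.2.1)
      (fun i j hij => (key i j hij).2.2.2.2))
  | true =>
    rcases caseAF hT (fun i => x (2*φ i)) (fun i => x (2*φ i+1)) (fun i => z (φ i))
      (fun i => hx _ _ (by omega)) (fun i => (flavA hfl2 (ψ i)).1) (fun i => (flavA hfl2 (ψ i)).2)
      hchain hne' (K.1 = true) (K.2.1 = true) (K.2.2.1 = true) (K.2.2.2.1 = true) (K.2.2.2.2 = true)
      (fun i j hij => (key i j hij).1) (fun i j hij => (key i j hij).2.1)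
      (fun i j hij => (key i j hij).2.2.1) (fun i j hij => (key i j hij).2.2.2.1)
      (fun i j hij => (key i j hij).2.2.2.2) with h | h
    · exact Or.inl h
    · refine Or.inr ⟨φ, hφ, fun i => flavA hfl2 (ψ i), fun i j hij => ?_⟩
      have k := key i j hij
      exact ⟨k.1.mpr h.1, k.2.1.mpr h.2.1, k.2.2.1.mpr h.2.2.1,
        k.2.2.2.1.mpr h.2.2.2.1, k.2.2.2.2.mpr h.2.2.2.2⟩

end PairMachine


section Ord

variable {V : Type u} {r : V → V → Prop}

/-- transitivity inside an acyclic set -/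
lemma transA (hT : IsTournament r) {W : Set V} (hW : AcyclicSet r W)
    {a b c : V} (ha : a ∈ W) (hb : b ∈ W) (hc : c ∈ W)
    (h1 : r a b) (h2 : r b c) : r a c := by
  by_cases hac : a = c
  · subst hac; exact absurd h2 (asymm_of_r hT h1)
  · refine r_of_not_r hT hac fun h3 => ?_
    exact hW ⟨a, ha, b, hb, c, hc, h1, h2, h3⟩

/-- extract a monotone chain from an injective sequence -/
lemma chain_extract (hT : IsTournament r) (t : ℕ → V) (ht : Function.Injective t) :
    ∃ ψ : ℕ → ℕ, StrictMono ψ ∧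
      ((∀ i j, i < j → r (t (ψ i)) (t (ψ j))) ∨ (∀ i j, i < j → r (t (ψ j)) (t (ψ i)))) := by
  classical
  obtain ⟨ψ, K, hψ, hc⟩ := ramsey2 (fun i j => decide (r (t i) (t j)))
  refine ⟨ψ, hψ, ?_⟩
  cases hK : K with
  | true =>
    exact Or.inl fun i j hij => of_decide_eq_true (by rw [hc i j hij, hK])
  | false =>
    refine Or.inr fun i j hij => ?_
    have hne : t (ψ j) ≠ t (ψ i) := fun e => (hψ hij).ne' (ht e)
    refine r_of_not_r hT hne fun h => ?_
    have := hc i j hij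
    rw [hK] at this
    exact absurd (this ▸ decide_eq_true h) (by simp)

/-- a maximal acyclic subset of `G` containing a given acyclic subset -/
lemma exists_maximal_acyclic (G W0 : Set V) (hW0 : W0 ⊆ G) (hW0ac : AcyclicSet r W0) :
    ∃ W : Set V, W0 ⊆ W ∧ W ⊆ G ∧ AcyclicSet r W ∧
      ∀ s ∈ G, s ∉ W → ¬ AcyclicSet r (insert s W) := by
  obtain ⟨W, hW0W, hWmax⟩ := zorn_subset_nonempty
    {W : Set V | W0 ⊆ W ∧ W ⊆ G ∧ AcyclicSet r W}
    (by
      intro c hc hchain hne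
      refine ⟨(⋃₀ c) ∪ W0, ⟨fun x hx => Or.inr hx, ?_, ?_⟩, fun s hs => ?_⟩
      · rintro x (⟨S, hS, hxS⟩ | hx)
        · exact (hc hS).2.1 hxS
        · exact hW0 hx
      · rintro ⟨a, ha, b, hb, c', hc', h1, h2, h3⟩
        -- all three lie in some common member of the chain (or W0)
        obtain ⟨Sa, hSa, haS⟩ : ∃ S ∈ c, a ∈ S := by
          rcases ha with ⟨S, hS, h⟩ | h
          · exact ⟨S, hS, h⟩
          · obtain ⟨S, hS⟩ := hne; exact ⟨S, hS, (hc hS).1 h⟩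
        obtain ⟨Sb, hSb, hbS⟩ : ∃ S ∈ c, b ∈ S := by
          rcases hb with ⟨S, hS, h⟩ | h
          · exact ⟨S, hS, h⟩
          · obtain ⟨S, hS⟩ := hne; exact ⟨S, hS, (hc hS).1 h⟩
        obtain ⟨Sc, hSc, hcS⟩ : ∃ S ∈ c, c' ∈ S := by
          rcases hc' with ⟨S, hS, h⟩ | h
          · exact ⟨S, hS, h⟩
          · obtain ⟨S, hS⟩ := hne; exact ⟨S, hS, (hc hS).1 h⟩
        obtain ⟨S, hS, hsub⟩ : ∃ S ∈ c, Sa ⊆ S ∧ Sb ⊆ S ∧ Sc ⊆ S := by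
          rcases hchain.directedOn Sa hSa Sb hSb with ⟨S1, hS1, h1a, h1b⟩
          rcases hchain.directedOn S1 hS1 Sc hSc with ⟨S2, hS2, h2a, h2b⟩
          exact ⟨S2, hS2, fun x hx => h2a (h1a hx), fun x hx => h2a (h1b hx), h2b⟩
        exact (hc hS).2.2 ⟨a, hsub.1 haS, b, hsub.2.1 hbS, c', hsub.2.2 hcS, h1, h2, h3⟩
      · exact fun x hx => Or.inl ⟨s, hs, hx⟩)
    W0 ⟨subset_rfl, hW0, hW0ac⟩
  refine ⟨W, hW0W, hWmax.1.2.1, hWmax.1.2.2, fun s hsG hsW hac => hsW ?_⟩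
  have hins : insert s W ∈ {W : Set V | W0 ⊆ W ∧ W ⊆ G ∧ AcyclicSet r W} :=
    ⟨hW0W.trans (Set.subset_insert s W),
     by rintro x (rfl | hx); exacts [hsG, hWmax.1.2.1 hx], hac⟩
  exact hWmax.2 hins (Set.subset_insert s W) (Set.mem_insert s W)

/-- V from a single vertex separating infinitely many consecutive pairs of a chain of pairs. -/
lemma sepV (hT : IsTournament r) (y : V) (p q : ℕ → V)
    (hpq : ∀ i, r (p i) (q i))
    (hcr : ∀ i j, i < j → r (p i) (p j) ∧ r (p i) (q j) ∧ r (q i) (p j) ∧ r (q i) (q j))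
    (hyp : ∀ i, y ≠ p i ∧ y ≠ q i)
    (hsep : ∀ i, ¬ (r (p i) y ↔ r (q i) y)) : MemB r := by
  classical
  obtain ⟨fl, ψ, hψ, hfl⟩ := pigeon_subseq (fun k => decide (r (p k) y))
  have mono : ∀ {i j : ℕ}, i < j → ψ i < ψ j := fun h => hψ h
  cases hfl2 : fl with
  | false =>
    -- y → p, q → y : descent flavour, direct V
    have h1 : ∀ k, r y (p (ψ k)) := by
      intro k
      refine r_of_not_r hT (hyp (ψ k)).1 fun h => ?_
      have := hfl k; rw [hfl2] at this
      exact absurd (this ▸ decide_eq_true h) (by simp)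
    have h2 : ∀ k, r (q (ψ k)) y := by
      intro k
      have hnp : ¬ r (p (ψ k)) y := fun h => by
        have := hfl k; rw [hfl2] at this
        exact absurd (this ▸ decide_eq_true h) (by simp)
      have := hsep (ψ k)
      by_cases hq : r (q (ψ k)) y
      · exact hq
      · exact absurd (iff_of_false hnp hq) this
    exact vlemF hT y (fun k => p (ψ k)) (fun k => q (ψ k)) (fun i => hpq _)
      (fun i j hij => hcr _ _ (mono hij)) h1 h2
  | true =>
    -- p → y, y → q : insertion flavour, shifted pairs
    have h1 : ∀ k, r (p (ψ k)) y := fun k => of_decide_eq_true (by rw [hfl k, hfl2])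
    have h2 : ∀ k, r y (q (ψ k)) := by
      intro k
      refine r_of_not_r hT (hyp (ψ k)).2 fun h => ?_
      exact absurd (iff_of_true (h1 k) h) (hsep (ψ k))
    refine vlemF hT y (fun k => q (ψ k)) (fun k => p (ψ (k+1)))
      (fun i => (hcr _ _ (mono (by omega))).2.2.1)
      (fun i j hij => ⟨(hcr _ _ (mono hij)).2.2.2,
        (hcr _ _ (mono (by omega : i < j + 1))).2.2.1, ?_, (hcr _ _ (mono (by omega))).1⟩)
      (fun i => h2 i) (fun i => h1 (i+1))
    show r (p (ψ (i+1))) (q (ψ j))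
    rcases lt_or_eq_of_le (show i+1 ≤ j by omega) with h | h
    · exact (hcr _ _ (mono h)).2.1
    · rw [h]; exact hpq (ψ j)

end Ord


section CaseC

variable {V : Type u} {r : V → V → Prop}

lemma flip_iff (hT : IsTournament r) {x y : V} {P : Prop} (hne : x ≠ y)
    (h : r x y ↔ P) : r y x ↔ ¬ P := by
  rw [← h]
  exact (hT.2 y x hne.symm)

lemma eq_of_not_both (hT : IsTournament r) {x y : V} (h1 : ¬ r x y) (h2 : ¬ r y x) : x = y := by
  by_contra hne
  exact h1 ((hT.2 x y hne).2 h2)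

/-- The heart of the analysis: infinitely many 3-cycles, each with two feet on the
maximal acyclic set `W` and apex outside `W`.  Either a member appears, or we find a
single pair `(β,γ)` in `W` with infinitely many apexes between them in reverse. -/
lemma caseC (hT : IsTournament r) (W : Set V) (hWac : AcyclicSet r W)
    (t b c : ℕ → V) (htinj : Function.Injective t)
    (htW : ∀ k, t k ∉ W) (hbW : ∀ k, b k ∈ W) (hcW : ∀ k, c k ∈ W)
    (hbc : ∀ k, r (b k) (c k)) (hct : ∀ k, r (c k) (t k)) (htb : ∀ k, r (t k) (b k)) :
    MemB r ∨ ∃ (β γ : V) (ψ : ℕ → ℕ), β ∈ W ∧ γ ∈ W ∧ r β γ ∧ StrictMono ψ ∧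
      ∀ k, r (t (ψ k)) β ∧ r γ (t (ψ k)) := by
  classical
  obtain ⟨ρ, K, hρ, hc⟩ := ramsey2 (fun i j =>
    ((decide (r (b i) (b j)), decide (r (b j) (b i)),
      decide (r (c i) (c j)), decide (r (c j) (c i))),
     (decide (r (c i) (b j)), decide (r (c j) (b i)),
      decide (r (b i) (c j)), decide (r (b j) (c i))),
     (decide (r (t i) (b j)), decide (r (b i) (t j)),
      decide (r (t i) (c j)), decide (r (c i) (t j)), decide (r (t i) (t j)))))
  set T : ℕ → V := fun n => t (ρ n) with hTdef
  set B : ℕ → V := fun n => b (ρ n) with hBdef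
  set C : ℕ → V := fun n => c (ρ n) with hCdef
  have hBC : ∀ k, r (B k) (C k) := fun k => hbc _
  have hCT : ∀ k, r (C k) (T k) := fun k => hct _
  have hTB : ∀ k, r (T k) (B k) := fun k => htb _
  have hTW : ∀ k, T k ∉ W := fun k => htW _
  have hBW : ∀ k, B k ∈ W := fun k => hbW _
  have hCW : ∀ k, C k ∈ W := fun k => hcW _
  have hTne : ∀ i j, i ≠ j → T i ≠ T j := fun i j hij e => hij (hρ.injective (htinj e))
  have hTBne : ∀ i j, T i ≠ B j := fun i j e => hTW i (e ▸ hBW j)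
  have hTCne : ∀ i j, T i ≠ C j := fun i j e => hTW i (e ▸ hCW j)
  -- the thirteen homogeneous iffs
  have iA1 : ∀ i j, i < j → (r (B i) (B j) ↔ K.1.1 = true) := fun i j hij =>
    iff_of_decide_eq (congrArg (·.1.1) (hc i j hij))
  have iA2 : ∀ i j, i < j → (r (B j) (B i) ↔ K.1.2.1 = true) := fun i j hij =>
    iff_of_decide_eq (congrArg (·.1.2.1) (hc i j hij))
  have iA3 : ∀ i j, i < j → (r (C i) (C j) ↔ K.1.2.2.1 = true) := fun i j hij =>
    iff_of_decide_eq (congrArg (·.1.2.2.1) (hc i j hij))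
  have iA4 : ∀ i j, i < j → (r (C j) (C i) ↔ K.1.2.2.2 = true) := fun i j hij =>
    iff_of_decide_eq (congrArg (·.1.2.2.2) (hc i j hij))
  have iM1 : ∀ i j, i < j → (r (C i) (B j) ↔ K.2.1.1 = true) := fun i j hij =>
    iff_of_decide_eq (congrArg (·.2.1.1) (hc i j hij))
  have iM2 : ∀ i j, i < j → (r (C j) (B i) ↔ K.2.1.2.1 = true) := fun i j hij =>
    iff_of_decide_eq (congrArg (·.2.1.2.1) (hc i j hij))
  have iM3 : ∀ i j, i < j → (r (B i) (C j) ↔ K.2.1.2.2.1 = true) := fun i j hij =>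
    iff_of_decide_eq (congrArg (·.2.1.2.2.1) (hc i j hij))
  have iM4 : ∀ i j, i < j → (r (B j) (C i) ↔ K.2.1.2.2.2 = true) := fun i j hij =>
    iff_of_decide_eq (congrArg (·.2.1.2.2.2) (hc i j hij))
  have iP1 : ∀ i j, i < j → (r (T i) (B j) ↔ K.2.2.1 = true) := fun i j hij =>
    iff_of_decide_eq (congrArg (·.2.2.1) (hc i j hij))
  have iP2 : ∀ i j, i < j → (r (B i) (T j) ↔ K.2.2.2.1 = true) := fun i j hij =>
    iff_of_decide_eq (congrArg (·.2.2.2.1) (hc i j hij))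
  have iQ1 : ∀ i j, i < j → (r (T i) (C j) ↔ K.2.2.2.2.1 = true) := fun i j hij =>
    iff_of_decide_eq (congrArg (·.2.2.2.2.1) (hc i j hij))
  have iQ2 : ∀ i j, i < j → (r (C i) (T j) ↔ K.2.2.2.2.2.1 = true) := fun i j hij =>
    iff_of_decide_eq (congrArg (·.2.2.2.2.2.1) (hc i j hij))
  have iS : ∀ i j, i < j → (r (T i) (T j) ↔ K.2.2.2.2.2.2 = true) := fun i j hij =>
    iff_of_decide_eq (congrArg (·.2.2.2.2.2.2) (hc i j hij))
  set P1 : Prop := K.2.2.1 = true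
  set P2 : Prop := K.2.2.2.1 = true
  set Q1 : Prop := K.2.2.2.2.1 = true
  set Q2 : Prop := K.2.2.2.2.2.1 = true
  set S : Prop := K.2.2.2.2.2.2 = true
  -- positive/negative forms for the t-bits
  have pP1 : P1 → ∀ i j, i < j → r (T i) (B j) := fun h i j hij => (iP1 i j hij).mpr h
  have nP1 : ¬P1 → ∀ i j, i < j → r (B j) (T i) := fun h i j hij =>
    ((flip_iff hT (hTBne i j) (iP1 i j hij)).mpr h)
  have pP2 : P2 → ∀ i j, i < j → r (B i) (T j) := fun h i j hij => (iP2 i j hij).mpr h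
  have nP2 : ¬P2 → ∀ i j, i < j → r (T j) (B i) := fun h i j hij =>
    ((flip_iff hT (Ne.symm (hTBne j i)) (iP2 i j hij)).mpr h)
  have pQ1 : Q1 → ∀ i j, i < j → r (T i) (C j) := fun h i j hij => (iQ1 i j hij).mpr h
  have nQ1 : ¬Q1 → ∀ i j, i < j → r (C j) (T i) := fun h i j hij =>
    ((flip_iff hT (hTCne i j) (iQ1 i j hij)).mpr h)
  have pQ2 : Q2 → ∀ i j, i < j → r (C i) (T j) := fun h i j hij => (iQ2 i j hij).mpr h
  have nQ2 : ¬Q2 → ∀ i j, i < j → r (T j) (C i) := fun h i j hij =>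
    ((flip_iff hT (Ne.symm (hTCne j i)) (iQ2 i j hij)).mpr h)
  have pS : S → ∀ i j, i < j → r (T i) (T j) := fun h i j hij => (iS i j hij).mpr h
  have nS : ¬S → ∀ i j, i < j → r (T j) (T i) := fun h i j hij =>
    ((flip_iff hT (hTne i j (Nat.ne_of_lt hij)) (iS i j hij)).mpr h)
  have hneUVW : ∀ i j, T i ≠ B j ∧ T i ≠ C j ∧ (i ≠ j → T i ≠ T j) :=
    fun i j => ⟨hTBne i j, hTCne i j, hTne i j⟩
  -- ψ-builders for the engine outcome
  have mono1 : StrictMono (fun k => ρ (k+1)) := fun a b h => hρ (by omega)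
  have mono2 : StrictMono (fun k => ρ (k+2)) := fun a b h => hρ (by omega)
  by_cases hseq : K.2.1.1 = true
  · -- ascending sequential pairs
    have hCB : ∀ i j, i < j → r (C i) (B j) := fun i j hij => (iM1 i j hij).mpr hseq
    have hBB : ∀ i j, i < j → r (B i) (B j) := fun i j hij =>
      transA hT hWac (hBW i) (hCW i) (hBW j) (hBC i) (hCB i j hij)
    have hBCc : ∀ i j, i < j → r (B i) (C j) := fun i j hij =>
      transA hT hWac (hBW i) (hBW j) (hCW j) (hBB i j hij) (hBC j)
    have hCC : ∀ i j, i < j → r (C i) (C j) := fun i j hij =>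
      transA hT hWac (hCW i) (hBW j) (hCW j) (hCB i j hij) (hBC j)
    exact Or.inl (caseBF hT B C T hBC hCT hTB
      (fun i j hij => ⟨hBB i j hij, hBCc i j hij, hCB i j hij, hCC i j hij⟩)
      hneUVW P1 P2 Q1 Q2 S iP1 iP2 iQ1 iQ2 iS)
  by_cases hseq' : K.2.1.2.1 = true
  · -- descending sequential pairs
    have hCB' : ∀ i j, i < j → r (C j) (B i) := fun i j hij => (iM2 i j hij).mpr hseq'
    have hBB' : ∀ i j, i < j → r (B j) (B i) := fun i j hij =>
      transA hT hWac (hBW j) (hCW j) (hBW i) (hBC j) (hCB' i j hij)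
    have hBC' : ∀ i j, i < j → r (B j) (C i) := fun i j hij =>
      transA hT hWac (hBW j) (hBW i) (hCW i) (hBB' i j hij) (hBC i)
    have hCC' : ∀ i j, i < j → r (C j) (C i) := fun i j hij =>
      transA hT hWac (hCW j) (hBW i) (hCW i) (hCB' i j hij) (hBC i)
    exact Or.inl (caseBB hT B C T hBC hCT hTB
      (fun i j hij => ⟨hBB' i j hij, hBC' i j hij, hCB' i j hij, hCC' i j hij⟩)
      hneUVW (¬Q1) (¬Q2) (¬P1) (¬P2) (¬S)
      (fun i j hij => flip_iff hT (hTCne i j) (iQ1 i j hij))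
      (fun i j hij => flip_iff hT (Ne.symm (hTCne j i)) (iQ2 i j hij))
      (fun i j hij => flip_iff hT (hTBne i j) (iP1 i j hij))
      (fun i j hij => flip_iff hT (Ne.symm (hTBne j i)) (iP2 i j hij))
      (fun i j hij => flip_iff hT (hTne i j (Nat.ne_of_lt hij)) (iS i j hij)))
  -- the crossing case: all relevant b's below all relevant c's
  have hC1 : ∀ i j, i < j → ¬ r (C i) (B j) := fun i j hij h => hseq ((iM1 i j hij).mp h)
  have hC2 : ∀ i j, i < j → ¬ r (C j) (B i) := fun i j hij h => hseq' ((iM2 i j hij).mp h)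
  have X2pos : ∀ i j, i < j → r (B j) (C i) := by
    by_cases hx : K.2.1.2.2.2 = true
    · exact fun i j hij => (iM4 i j hij).mpr hx
    · exfalso
      have heq : ∀ i j, i < j → B j = C i := fun i j hij =>
        eq_of_not_both hT (fun h => hx ((iM4 i j hij).mp h)) (hC1 i j hij)
      have e1 : B 1 = C 0 := heq 0 1 (by omega)
      have e2 : B 2 = C 0 := heq 0 2 (by omega)
      have e3 : B 2 = C 1 := heq 1 2 (by omega)
      have hbad : r (B 1) (B 1) := by
        have h := hBC 1
        rw [← e3, e2, ← e1] at h; exact h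
      exact hT.1 _ hbad
  have X1pos : ∀ i j, i < j → r (B i) (C j) := by
    by_cases hx : K.2.1.2.2.1 = true
    · exact fun i j hij => (iM3 i j hij).mpr hx
    · exfalso
      have heq : ∀ i j, i < j → B i = C j := fun i j hij =>
        eq_of_not_both hT (fun h => hx ((iM3 i j hij).mp h)) (hC2 i j hij)
      have e1 : B 0 = C 1 := heq 0 1 (by omega)
      have e2 : B 0 = C 2 := heq 0 2 (by omega)
      have e3 : B 1 = C 2 := heq 1 2 (by omega)
      have hbad : r (B 1) (B 1) := by
        have h := hBC 1
        rw [← e1, e2, ← e3] at h; exact h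
      exact hT.1 _ hbad
  -- recipes shared between branches
  by_cases hA1 : K.1.1 = true
  · -- B ascending
    have pB : ∀ i j, i < j → r (B i) (B j) := fun i j hij => (iA1 i j hij).mpr hA1
    by_cases hP1 : P1
    · by_cases hA3 : K.1.2.2.1 = true
      · -- C ascending
        have pC : ∀ i j, i < j → r (C i) (C j) := fun i j hij => (iA3 i j hij).mpr hA3
        by_cases hQ2 : Q2
        · by_cases hP2 : P2
          · by_cases hS : S
            · exact Or.inl (vlemF hT (C 0) (fun k => T (k+1)) (fun k => B (k+1))
                (fun i => hTB (i+1))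
                (fun i j hij => ⟨pS hS _ _ (by omega), pP1 hP1 _ _ (by omega),
                  pP2 hP2 _ _ (by omega), pB _ _ (by omega)⟩)
                (fun i => pQ2 hQ2 0 (i+1) (by omega))
                (fun i => X2pos 0 (i+1) (by omega)))
            · exact Or.inl (patB_TTT hT T B (nS hS) hTB (pP2 hP2) (pP1 hP1) pB)
          · exact Or.inr ⟨B 0, C 0, fun k => ρ (k+1), hbW _, hcW _, hBC 0, mono1,
              fun k => ⟨nP2 hP2 0 (k+1) (by omega), pQ2 hQ2 0 (k+1) (by omega)⟩⟩
        · exact Or.inl (caseBF hT (fun g => C (2*g)) (fun g => C (2*g+1)) (fun g => T (2*g+1))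
            (fun g => pC _ _ (by omega)) (fun g => hCT _) (fun g => nQ2 hQ2 _ _ (by omega))
            (fun g h hgh => ⟨pC _ _ (by omega), pC _ _ (by omega), pC _ _ (by omega),
              pC _ _ (by omega)⟩)
            (fun g h => ⟨hTCne _ _, hTCne _ _, fun hgh => hTne _ _ (by omega)⟩)
            Q1 Q2 Q1 Q2 S
            (fun g h hgh => iQ1 _ _ (by omega)) (fun g h hgh => iQ2 _ _ (by omega))
            (fun g h hgh => iQ1 _ _ (by omega)) (fun g h hgh => iQ2 _ _ (by omega))
            (fun g h hgh => iS _ _ (by omega)))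
      by_cases hA4 : K.1.2.2.2 = true
      · -- C descending
        have pC' : ∀ i j, i < j → r (C j) (C i) := fun i j hij => (iA4 i j hij).mpr hA4
        by_cases hQ1 : Q1
        · exact Or.inl (caseBB hT (fun g => C (2*g+1)) (fun g => C (2*g)) (fun g => T (2*g))
            (fun g => pC' _ _ (by omega)) (fun g => hCT _) (fun g => pQ1 hQ1 _ _ (by omega))
            (fun g h hgh => ⟨pC' _ _ (by omega), pC' _ _ (by omega), pC' _ _ (by omega),
              pC' _ _ (by omega)⟩)
            (fun g h => ⟨hTCne _ _, hTCne _ _, fun hgh => hTne _ _ (by omega)⟩)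
            (¬Q1) (¬Q2) (¬Q1) (¬Q2) (¬S)
            (fun g h hgh => flip_iff hT (hTCne _ _) (iQ1 (2*g) (2*h) (by omega)))
            (fun g h hgh => flip_iff hT (Ne.symm (hTCne _ _)) (iQ2 (2*g) (2*h) (by omega)))
            (fun g h hgh => flip_iff hT (hTCne _ _) (iQ1 (2*g) (2*h+1) (by omega)))
            (fun g h hgh => flip_iff hT (Ne.symm (hTCne _ _)) (iQ2 (2*g+1) (2*h) (by omega)))
            (fun g h hgh => flip_iff hT (hTne _ _ (by omega)) (iS (2*g) (2*h) (by omega))))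
        · by_cases hP2 : P2
          · by_cases hS : S
            · by_cases hQ2 : Q2
              · exact Or.inl (vlemF hT (C 0) (fun k => T (k+1)) (fun k => B (k+1))
                  (fun i => hTB (i+1))
                  (fun i j hij => ⟨pS hS _ _ (by omega), pP1 hP1 _ _ (by omega),
                    pP2 hP2 _ _ (by omega), pB _ _ (by omega)⟩)
                  (fun i => pQ2 hQ2 0 (i+1) (by omega))
                  (fun i => X2pos 0 (i+1) (by omega)))
              · exact Or.inl (patB_FFT hT C T pC' hCT (nQ1 hQ1) (nQ2 hQ2) (pS hS))
            · exact Or.inl (patB_TTT hT T B (nS hS) hTB (pP2 hP2) (pP1 hP1) pB)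
          · by_cases hQ2 : Q2
            · exact Or.inr ⟨B 0, C 0, fun k => ρ (k+1), hbW _, hcW _, hBC 0, mono1,
                fun k => ⟨nP2 hP2 0 (k+1) (by omega), pQ2 hQ2 0 (k+1) (by omega)⟩⟩
            · by_cases hS : S
              · exact Or.inl (patB_FFT hT C T pC' hCT (nQ1 hQ1) (nQ2 hQ2) (pS hS))
              · refine Or.inl (vlemB hT (B 0) (fun g => C (2*g+1)) (fun g => T (2*g))
                  (fun g => nQ1 hQ1 _ _ (by omega))
                  (fun i j hij => ⟨pC' _ _ (by omega), nQ1 hQ1 _ _ (by omega),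
                    nQ2 hQ2 _ _ (by omega), nS hS _ _ (by omega)⟩)
                  (fun g => X1pos 0 _ (by omega)) (fun g => ?_))
                rcases Nat.eq_zero_or_pos g with hg | hg
                · subst hg; exact hTB 0
                · exact nP2 hP2 0 (2*g) (by omega)
      · -- C constant
        have hCeq : ∀ i j, C i = C j := by
          intro i j
          rcases lt_trichotomy i j with h|h|h
          · exact eq_of_not_both hT (fun hr => hA3 ((iA3 i j h).mp hr))
              (fun hr => hA4 ((iA4 i j h).mp hr))
          · rw [h]
          · exact (eq_of_not_both hT (fun hr => hA3 ((iA3 j i h).mp hr))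
              (fun hr => hA4 ((iA4 j i h).mp hr))).symm
        by_cases hP2 : P2
        · by_cases hS : S
          · exact Or.inl (vlemF hT (C 0) (fun k => T (k+1)) (fun k => B (k+1))
              (fun i => hTB (i+1))
              (fun i j hij => ⟨pS hS _ _ (by omega), pP1 hP1 _ _ (by omega),
                pP2 hP2 _ _ (by omega), pB _ _ (by omega)⟩)
              (fun i => by rw [hCeq 0 (i+1)]; exact hCT (i+1))
              (fun i => by rw [← hCeq (i+1) 0]; exact hBC (i+1)))
          · exact Or.inl (patB_TTT hT T B (nS hS) hTB (pP2 hP2) (pP1 hP1) pB)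
        · exact Or.inr ⟨B 0, C 0, fun k => ρ (k+1), hbW _, hcW _, hBC 0, mono1,
            fun k => ⟨nP2 hP2 0 (k+1) (by omega),
              by rw [hCeq 0 (k+1)]; exact hCT (k+1)⟩⟩
    · -- ¬P1 with B ascending : R2
      exact Or.inl (caseBF hT (fun g => B (2*g)) (fun g => B (2*g+1)) (fun g => T (2*g))
        (fun g => pB _ _ (by omega)) (fun g => nP1 hP1 _ _ (by omega)) (fun g => hTB _)
        (fun g h hgh => ⟨pB _ _ (by omega), pB _ _ (by omega), pB _ _ (by omega),
          pB _ _ (by omega)⟩)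
        (fun g h => ⟨hTBne _ _, hTBne _ _, fun hgh => hTne _ _ (by omega)⟩)
        P1 P2 P1 P2 S
        (fun g h hgh => iP1 _ _ (by omega)) (fun g h hgh => iP2 _ _ (by omega))
        (fun g h hgh => iP1 _ _ (by omega)) (fun g h hgh => iP2 _ _ (by omega))
        (fun g h hgh => iS _ _ (by omega)))
  by_cases hA2 : K.1.2.1 = true
  · -- B descending
    have pB' : ∀ i j, i < j → r (B j) (B i) := fun i j hij => (iA2 i j hij).mpr hA2
    by_cases hP2 : P2
    · -- R2'
      exact Or.inl (caseBB hT (fun g => B (2*g+1)) (fun g => B (2*g)) (fun g => T (2*g+1))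
        (fun g => pB' _ _ (by omega)) (fun g => pP2 hP2 _ _ (by omega)) (fun g => hTB _)
        (fun g h hgh => ⟨pB' _ _ (by omega), pB' _ _ (by omega), pB' _ _ (by omega),
          pB' _ _ (by omega)⟩)
        (fun g h => ⟨hTBne _ _, hTBne _ _, fun hgh => hTne _ _ (by omega)⟩)
        (¬P1) (¬P2) (¬P1) (¬P2) (¬S)
        (fun g h hgh => flip_iff hT (hTBne _ _) (iP1 (2*g+1) (2*h) (by omega)))
        (fun g h hgh => flip_iff hT (Ne.symm (hTBne _ _)) (iP2 (2*g) (2*h+1) (by omega)))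
        (fun g h hgh => flip_iff hT (hTBne _ _) (iP1 (2*g+1) (2*h+1) (by omega)))
        (fun g h hgh => flip_iff hT (Ne.symm (hTBne _ _)) (iP2 (2*g+1) (2*h+1) (by omega)))
        (fun g h hgh => flip_iff hT (hTne _ _ (by omega)) (iS (2*g+1) (2*h+1) (by omega))))
    · by_cases hA3 : K.1.2.2.1 = true
      · -- C ascending
        have pC : ∀ i j, i < j → r (C i) (C j) := fun i j hij => (iA3 i j hij).mpr hA3
        by_cases hQ2 : Q2
        · exact Or.inr ⟨B 0, C 0, fun k => ρ (k+1), hbW _, hcW _, hBC 0, mono1,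
            fun k => ⟨nP2 hP2 0 (k+1) (by omega), pQ2 hQ2 0 (k+1) (by omega)⟩⟩
        · exact Or.inl (caseBF hT (fun g => C (2*g)) (fun g => C (2*g+1)) (fun g => T (2*g+1))
            (fun g => pC _ _ (by omega)) (fun g => hCT _) (fun g => nQ2 hQ2 _ _ (by omega))
            (fun g h hgh => ⟨pC _ _ (by omega), pC _ _ (by omega), pC _ _ (by omega),
              pC _ _ (by omega)⟩)
            (fun g h => ⟨hTCne _ _, hTCne _ _, fun hgh => hTne _ _ (by omega)⟩)
            Q1 Q2 Q1 Q2 S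
            (fun g h hgh => iQ1 _ _ (by omega)) (fun g h hgh => iQ2 _ _ (by omega))
            (fun g h hgh => iQ1 _ _ (by omega)) (fun g h hgh => iQ2 _ _ (by omega))
            (fun g h hgh => iS _ _ (by omega)))
      by_cases hA4 : K.1.2.2.2 = true
      · -- C descending
        have pC' : ∀ i j, i < j → r (C j) (C i) := fun i j hij => (iA4 i j hij).mpr hA4
        by_cases hQ1 : Q1
        · exact Or.inl (caseBB hT (fun g => C (2*g+1)) (fun g => C (2*g)) (fun g => T (2*g))
            (fun g => pC' _ _ (by omega)) (fun g => hCT _) (fun g => pQ1 hQ1 _ _ (by omega))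
            (fun g h hgh => ⟨pC' _ _ (by omega), pC' _ _ (by omega), pC' _ _ (by omega),
              pC' _ _ (by omega)⟩)
            (fun g h => ⟨hTCne _ _, hTCne _ _, fun hgh => hTne _ _ (by omega)⟩)
            (¬Q1) (¬Q2) (¬Q1) (¬Q2) (¬S)
            (fun g h hgh => flip_iff hT (hTCne _ _) (iQ1 (2*g) (2*h) (by omega)))
            (fun g h hgh => flip_iff hT (Ne.symm (hTCne _ _)) (iQ2 (2*g) (2*h) (by omega)))
            (fun g h hgh => flip_iff hT (hTCne _ _) (iQ1 (2*g) (2*h+1) (by omega)))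
            (fun g h hgh => flip_iff hT (Ne.symm (hTCne _ _)) (iQ2 (2*g+1) (2*h) (by omega)))
            (fun g h hgh => flip_iff hT (hTne _ _ (by omega)) (iS (2*g) (2*h) (by omega))))
        · by_cases hQ2 : Q2
          · exact Or.inr ⟨B 0, C 0, fun k => ρ (k+1), hbW _, hcW _, hBC 0, mono1,
              fun k => ⟨nP2 hP2 0 (k+1) (by omega), pQ2 hQ2 0 (k+1) (by omega)⟩⟩
          · by_cases hS : S
            · exact Or.inl (patB_FFT hT C T pC' hCT (nQ1 hQ1) (nQ2 hQ2) (pS hS))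
            · refine Or.inl (vlemB hT (B 0) (fun g => C (2*g+1)) (fun g => T (2*g))
                (fun g => nQ1 hQ1 _ _ (by omega))
                (fun i j hij => ⟨pC' _ _ (by omega), nQ1 hQ1 _ _ (by omega),
                  nQ2 hQ2 _ _ (by omega), nS hS _ _ (by omega)⟩)
                (fun g => X1pos 0 _ (by omega)) (fun g => ?_))
              rcases Nat.eq_zero_or_pos g with hg | hg
              · subst hg; exact hTB 0
              · exact nP2 hP2 0 (2*g) (by omega)
      · -- C constant
        have hCeq : ∀ i j, C i = C j := by
          intro i j
          rcases lt_trichotomy i j with h|h|h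
          · exact eq_of_not_both hT (fun hr => hA3 ((iA3 i j h).mp hr))
              (fun hr => hA4 ((iA4 i j h).mp hr))
          · rw [h]
          · exact (eq_of_not_both hT (fun hr => hA3 ((iA3 j i h).mp hr))
              (fun hr => hA4 ((iA4 j i h).mp hr))).symm
        exact Or.inr ⟨B 0, C 0, fun k => ρ (k+1), hbW _, hcW _, hBC 0, mono1,
          fun k => ⟨nP2 hP2 0 (k+1) (by omega),
            by rw [hCeq 0 (k+1)]; exact hCT (k+1)⟩⟩
  · -- B constant
    have hBeq : ∀ i j, B i = B j := by
      intro i j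
      rcases lt_trichotomy i j with h|h|h
      · exact eq_of_not_both hT (fun hr => hA1 ((iA1 i j h).mp hr))
          (fun hr => hA2 ((iA2 i j h).mp hr))
      · rw [h]
      · exact (eq_of_not_both hT (fun hr => hA1 ((iA1 j i h).mp hr))
          (fun hr => hA2 ((iA2 j i h).mp hr))).symm
    have hTB0 : ∀ k, r (T k) (B 0) := fun k => by rw [hBeq 0 k]; exact hTB k
    have hB0C : ∀ k, r (B 0) (C k) := fun k => by rw [hBeq 0 k]; exact hBC k
    by_cases hA3 : K.1.2.2.1 = true
    · -- C ascending
      have pC : ∀ i j, i < j → r (C i) (C j) := fun i j hij => (iA3 i j hij).mpr hA3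
      by_cases hQ2 : Q2
      · by_cases hQ1 : Q1
        · by_cases hS : S
          · exact Or.inl (vlemF hT (B 0) C T hCT
              (fun i j hij => ⟨pC i j hij, pQ2 hQ2 i j hij, pQ1 hQ1 i j hij, pS hS i j hij⟩)
              hB0C hTB0)
          · exact Or.inl (caseBB hT (fun g => T (2*g+1)) (fun g => T (2*g))
              (fun g => C (2*g+1))
              (fun g => nS hS _ _ (by omega)) (fun g => pQ1 hQ1 _ _ (by omega))
              (fun g => hCT _)
              (fun g h hgh => ⟨nS hS _ _ (by omega), nS hS _ _ (by omega),
                nS hS _ _ (by omega), nS hS _ _ (by omega)⟩)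
              (fun g h => ⟨(Ne.symm (hTCne _ _)), (Ne.symm (hTCne _ _)), fun hgh => by
                rcases Nat.lt_or_ge g h with h' | h'
                · exact ne_of_r hT (pC (2*g+1) (2*h+1) (by omega))
                · exact (ne_of_r hT (pC (2*h+1) (2*g+1) (by omega))).symm⟩)
              (¬Q2) (¬Q1) (¬Q2) (¬Q1) False
              (fun g h hgh => flip_iff hT (Ne.symm (hTCne _ _)) (iQ2 (2*g+1) (2*h) (by omega)))
              (fun g h hgh => flip_iff hT (hTCne _ _) (iQ1 (2*g) (2*h+1) (by omega)))
              (fun g h hgh => flip_iff hT (Ne.symm (hTCne _ _)) (iQ2 (2*g+1) (2*h+1) (by omega)))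
              (fun g h hgh => flip_iff hT (hTCne _ _) (iQ1 (2*g+1) (2*h+1) (by omega)))
              (fun g h hgh => iff_of_false (asymm_of_r hT (pC (2*g+1) (2*h+1) (by omega)))
                (by simp)))
        · exact Or.inr ⟨B 0, C 1, fun k => ρ (k+2), hbW _, hcW _,
            hB0C 1, mono2,
            fun k => ⟨hTB0 (k+2), pQ2 hQ2 1 (k+2) (by omega)⟩⟩
      · exact Or.inl (caseBF hT (fun g => C (2*g)) (fun g => C (2*g+1)) (fun g => T (2*g+1))
          (fun g => pC _ _ (by omega)) (fun g => hCT _) (fun g => nQ2 hQ2 _ _ (by omega))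
          (fun g h hgh => ⟨pC _ _ (by omega), pC _ _ (by omega), pC _ _ (by omega),
            pC _ _ (by omega)⟩)
          (fun g h => ⟨hTCne _ _, hTCne _ _, fun hgh => hTne _ _ (by omega)⟩)
          Q1 Q2 Q1 Q2 S
          (fun g h hgh => iQ1 _ _ (by omega)) (fun g h hgh => iQ2 _ _ (by omega))
          (fun g h hgh => iQ1 _ _ (by omega)) (fun g h hgh => iQ2 _ _ (by omega))
          (fun g h hgh => iS _ _ (by omega)))
    by_cases hA4 : K.1.2.2.2 = true
    · -- C descending
      have pC' : ∀ i j, i < j → r (C j) (C i) := fun i j hij => (iA4 i j hij).mpr hA4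
      by_cases hQ1 : Q1
      · exact Or.inl (caseBB hT (fun g => C (2*g+1)) (fun g => C (2*g)) (fun g => T (2*g))
          (fun g => pC' _ _ (by omega)) (fun g => hCT _) (fun g => pQ1 hQ1 _ _ (by omega))
          (fun g h hgh => ⟨pC' _ _ (by omega), pC' _ _ (by omega), pC' _ _ (by omega),
            pC' _ _ (by omega)⟩)
          (fun g h => ⟨hTCne _ _, hTCne _ _, fun hgh => hTne _ _ (by omega)⟩)
          (¬Q1) (¬Q2) (¬Q1) (¬Q2) (¬S)
          (fun g h hgh => flip_iff hT (hTCne _ _) (iQ1 (2*g) (2*h) (by omega)))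
          (fun g h hgh => flip_iff hT (Ne.symm (hTCne _ _)) (iQ2 (2*g) (2*h) (by omega)))
          (fun g h hgh => flip_iff hT (hTCne _ _) (iQ1 (2*g) (2*h+1) (by omega)))
          (fun g h hgh => flip_iff hT (Ne.symm (hTCne _ _)) (iQ2 (2*g+1) (2*h) (by omega)))
          (fun g h hgh => flip_iff hT (hTne _ _ (by omega)) (iS (2*g) (2*h) (by omega))))
      · by_cases hQ2 : Q2
        · exact Or.inr ⟨B 0, C 1, fun k => ρ (k+2), hbW _, hcW _,
            hB0C 1, mono2,
            fun k => ⟨hTB0 (k+2), pQ2 hQ2 1 (k+2) (by omega)⟩⟩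
        · by_cases hS : S
          · exact Or.inl (patB_FFT hT C T pC' hCT (nQ1 hQ1) (nQ2 hQ2) (pS hS))
          · exact Or.inl (vlemB hT (B 0) C T hCT
              (fun i j hij => ⟨pC' i j hij, nQ1 hQ1 i j hij, nQ2 hQ2 i j hij, nS hS i j hij⟩)
              hB0C hTB0)
    · -- C constant too
      have hCeq : ∀ i j, C i = C j := by
        intro i j
        rcases lt_trichotomy i j with h|h|h
        · exact eq_of_not_both hT (fun hr => hA3 ((iA3 i j h).mp hr))
            (fun hr => hA4 ((iA4 i j h).mp hr))
        · rw [h]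
        · exact (eq_of_not_both hT (fun hr => hA3 ((iA3 j i h).mp hr))
            (fun hr => hA4 ((iA4 j i h).mp hr))).symm
      exact Or.inr ⟨B 0, C 0, fun k => ρ (k+1), hbW _, hcW _, hBC 0, mono1,
        fun k => ⟨hTB0 (k+1), by rw [hCeq 0 (k+1)]; exact hCT (k+1)⟩⟩

end CaseC


section Win

variable {V : Type u} {r : V → V → Prop}

lemma chain_acyclic (hT : IsTournament r) {d : ℕ → V} (hd : ∀ i j, i < j → r (d i) (d j)) :
    AcyclicSet r (Set.range d) := by
  rintro ⟨a, ⟨i, rfl⟩, b, ⟨j, rfl⟩, c, ⟨k, rfl⟩, h1, h2, h3⟩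
  have c1 := (char_lt hT hd i j).mp h1
  have c2 := (char_lt hT hd j k).mp h2
  have c3 := (char_lt hT hd k i).mp h3
  omega

/-- From any infinite (selected) chain inside an acyclic set, a sequence of sequential
separated pairs with separators outside the acyclic set. -/
lemma windowSep (hT : IsTournament r) (hAI : AcyclicallyIndecomposable r)
    {W : Set V} (hWac : AcyclicSet r W) (d : ℕ → V) (hd : ∀ i j, i < j → r (d i) (d j))
    (hdW : ∀ i, d i ∈ W) :
    ∃ p q y : ℕ → V, (∀ k, p k ∈ W) ∧ (∀ k, q k ∈ W) ∧ (∀ k, y k ∉ W) ∧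
      (∀ k, r (p k) (q k)) ∧
      (∀ i j, i < j → r (p i) (p j) ∧ r (p i) (q j) ∧ r (q i) (p j) ∧ r (q i) (q j)) ∧
      (∀ k, ¬ (r (p k) (y k) ↔ r (q k) (y k))) := by
  classical
  set P : ℕ → Set V := fun k =>
    {a | a ∈ W ∧ (a = d (2*k) ∨ r (d (2*k)) a) ∧ (a = d (2*k+1) ∨ r a (d (2*k+1)))}
    with hPdef
  have hmem1 : ∀ k, d (2*k) ∈ P k := fun k => ⟨hdW _, Or.inl rfl, Or.inr (hd _ _ (by omega))⟩
  have hmem2 : ∀ k, d (2*k+1) ∈ P k := fun k => ⟨hdW _, Or.inr (hd _ _ (by omega)), Or.inl rfl⟩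
  have hPW : ∀ k, P k ⊆ W := fun k a ha => ha.1
  have hPac : ∀ k, AcyclicSet r (P k) := by
    rintro k ⟨a, ha, b, hb, c, hc, h1, h2, h3⟩
    exact hWac ⟨a, ha.1, b, hb.1, c, hc.1, h1, h2, h3⟩
  have hsep : ∀ k, ∃ y, y ∉ P k ∧ ∃ a ∈ P k, ∃ b ∈ P k, ¬ (r a y ↔ r b y) := by
    intro k
    by_contra hcon
    push_neg at hcon
    have hauto : Autonomous r (P k) := fun a ha b hb y hy => hcon y hy a ha b hb
    have hsub := hAI (P k) hauto (hPac k)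
    exact ne_of_r hT (hd (2*k) (2*k+1) (by omega)) (hsub (hmem1 k) (hmem2 k))
  choose y hyP a ha b hb hab using hsep
  -- interval upper/lower bound facts
  have hupper : ∀ k, ∀ x ∈ P k, x = d (2*k+1) ∨ r x (d (2*k+1)) := fun k x hx => hx.2.2
  have hlower : ∀ k, ∀ x ∈ P k, x = d (2*k) ∨ r (d (2*k)) x := fun k x hx => hx.2.1
  -- separators are outside W
  have hyW : ∀ k, y k ∉ W := by
    intro k hyWmem
    have hnotP : ¬ (y k ∈ W ∧ (y k = d (2*k) ∨ r (d (2*k)) (y k)) ∧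
        (y k = d (2*k+1) ∨ r (y k) (d (2*k+1)))) := hyP k
    by_cases hc1 : (y k = d (2*k) ∨ r (d (2*k)) (y k))
    · have hc2 : ¬ (y k = d (2*k+1) ∨ r (y k) (d (2*k+1))) :=
        fun h => hnotP ⟨hyWmem, hc1, h⟩
      push_neg at hc2
      have hY : r (d (2*k+1)) (y k) :=
        r_of_not_r hT (fun e => hc2.1 e.symm) hc2.2
      have hall : ∀ x ∈ P k, r x (y k) := by
        intro x hx
        rcases hupper k x hx with e | hxu
        · rw [e]; exact hY
        · exact transA hT hWac hx.1 (hdW _) hyWmem hxu hY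
      exact hab k (iff_of_true (hall _ (ha k)) (hall _ (hb k)))
    · push_neg at hc1
      have hY : r (y k) (d (2*k)) := r_of_not_r hT hc1.1 hc1.2
      have hall : ∀ x ∈ P k, r (y k) x := by
        intro x hx
        rcases hlower k x hx with e | hxl
        · rw [e]; exact hY
        · exact transA hT hWac hyWmem (hdW _) hx.1 hY hxl
      exact hab k (iff_of_false (asymm_of_r hT (hall _ (ha k)))
        (asymm_of_r hT (hall _ (hb k))))
  -- cross-window order
  have hcross : ∀ i j, i < j → ∀ x ∈ P i, ∀ x' ∈ P j, r x x' := by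
    intro i j hij x hx x' hx'
    have h1 : r (d (2*i+1)) (d (2*j)) := hd _ _ (by omega)
    have h2 : r (d (2*i+1)) x' := by
      rcases hlower j x' hx' with e | h
      · rw [e]; exact h1
      · exact transA hT hWac (hdW _) (hdW _) hx'.1 h1 h
    rcases hupper i x hx with e | h
    · rw [e]; exact h2
    · exact transA hT hWac hx.1 (hdW _) hx'.1 h h2
  -- orient the separated pairs
  set p : ℕ → V := fun k => if r (a k) (b k) then a k else b k with hp
  set q : ℕ → V := fun k => if r (a k) (b k) then b k else a k with hq
  have hpP : ∀ k, p k ∈ P k := by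
    intro k
    rw [hp]; dsimp only
    split_ifs
    · exact ha k
    · exact hb k
  have hqP : ∀ k, q k ∈ P k := by
    intro k
    rw [hq]; dsimp only
    split_ifs
    · exact hb k
    · exact ha k
  have hpq : ∀ k, r (p k) (q k) := by
    intro k
    rw [hp, hq]; dsimp only
    split_ifs with hsplit
    · exact hsplit
    · exact r_of_not_r hT (fun e => hab k (by rw [← e])) hsplit
  have hsep' : ∀ k, ¬ (r (p k) (y k) ↔ r (q k) (y k)) := by
    intro k
    rw [hp, hq]; dsimp only
    split_ifs
    · exact hab k
    · exact fun h => hab k h.symm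
  exact ⟨p, q, y, fun k => hPW k (hpP k), fun k => hPW k (hqP k), hyW, hpq,
    fun i j hij => ⟨hcross i j hij _ (hpP i) _ (hpP j), hcross i j hij _ (hpP i) _ (hqP j),
      hcross i j hij _ (hqP i) _ (hpP j), hcross i j hij _ (hqP i) _ (hqP j)⟩, hsep'⟩

end Win


section Step1

variable {V : Type u} {r : V → V → Prop}

/-- the intersection of "in-between" conditions from a list of apex pairs -/
def GSet {V : Type u} (r : V → V → Prop) (L : List (V × V)) : Set V :=
  {x | ∀ p ∈ L, r x p.1 ∧ r p.2 x}

lemma subseq_or (P : ℕ → Prop) :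
    ∃ ψ : ℕ → ℕ, StrictMono ψ ∧ ((∀ g, P (ψ g)) ∨ (∀ g, ¬ P (ψ g))) := by
  classical
  by_cases h : (setOf P).Infinite
  · exact ⟨Nat.nth P, Nat.nth_strictMono h, Or.inl fun g => Nat.nth_mem_of_infinite h g⟩
  · have h2 : (setOf (fun n => ¬ P n)).Infinite := by
      rw [Set.not_infinite] at h
      have := h.infinite_compl
      exact this
    exact ⟨Nat.nth _, Nat.nth_strictMono h2, Or.inr fun g => Nat.nth_mem_of_infinite h2 g⟩

lemma descent_of_insert (hT : IsTournament r) {W : Set V} (hWac : AcyclicSet r W)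
    {s : V} (hs : s ∉ W) (hnac : ¬ AcyclicSet r (insert s W)) :
    ∃ b c, b ∈ W ∧ c ∈ W ∧ r b c ∧ r c s ∧ r s b := by
  rw [AcyclicSet, not_not] at hnac
  obtain ⟨a, ha, b, hb, c, hc, h1, h2, h3⟩ := hnac
  rcases ha with rfl | haW
  · -- a = s
    rcases hb with rfl | hbW
    · exact absurd h1 (hT.1 _)
    rcases hc with rfl | hcW
    · exact absurd h2 (asymm_of_r hT h1)
    exact ⟨b, c, hbW, hcW, h2, h3, h1⟩
  · rcases hb with rfl | hbW
    · rcases hc with rfl | hcW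
      · exact absurd h2 (hT.1 _)
      exact ⟨c, a, hcW, haW, h3, h1, h2⟩
    · rcases hc with rfl | hcW
      · exact ⟨a, b, haW, hbW, h1, h2, h3⟩
      · exact absurd ⟨a, haW, b, hbW, c, hcW, h1, h2, h3⟩ hWac

lemma flip_AI (hT : IsTournament r) (hAI : AcyclicallyIndecomposable r) :
    AcyclicallyIndecomposable (fun x y => r y x) := by
  intro A hAuto hAc
  refine hAI A ?_ ?_
  · intro x hx x' hx' y hy
    have h1 := hAuto x hx x' hx' y hy
    have hne : x ≠ y := fun e => hy (e ▸ hx)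
    have hne' : x' ≠ y := fun e => hy (e ▸ hx')
    rw [hT.2 x y hne, hT.2 x' y hne']
    simp only at h1
    tauto
  · rintro ⟨a, ha, b, hb, c, hc, h1, h2, h3⟩
    exact hAc ⟨a, ha, c, hc, b, hb, h3, h2, h1⟩

lemma GSet_flip (L : List (V × V)) :
    GSet (fun x y => r y x) (L.map Prod.swap) = GSet r L := by
  ext x
  simp only [GSet, Set.mem_setOf_eq, List.mem_map]
  constructor
  · intro h p hp
    have := h p.swap ⟨p, hp, rfl⟩
    exact ⟨this.2, this.1⟩
  · rintro h p ⟨q, hq, rfl⟩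
    exact ⟨(h q hq).2, (h q hq).1⟩

end Step1


section Step2

variable {V : Type u} {r : V → V → Prop}

lemma stepCore (hT : IsTournament r) (hAI : AcyclicallyIndecomposable r)
    (L : List (V × V)) (hnm : ¬ MemB r)
    (d : ℕ → V) (hd : ∀ i j, i < j → r (d i) (d j)) (hdG : ∀ k, d k ∈ GSet r L) :
    ∃ β γ : V, β ∈ GSet r L ∧ γ ∈ GSet r L ∧ r β γ ∧
      ∃ t : ℕ → V, Function.Injective t ∧ ∀ k, t k ∈ GSet r ((β,γ) :: L) := by
  classical
  obtain ⟨W, hdW', hWG, hWac, hWmax⟩ :=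
    exists_maximal_acyclic (r := r) (GSet r L) (Set.range d)
      (by rintro x ⟨k, rfl⟩; exact hdG k) (chain_acyclic hT hd)
  have hdW : ∀ i, d i ∈ W := fun i => hdW' ⟨i, rfl⟩
  obtain ⟨p, q, y, hpW, hqW, hyW, hpq, hcross, hsepw⟩ := windowSep hT hAI hWac d hd hdW
  obtain ⟨ρ, Keq, hρ, hceq⟩ := ramsey2 (fun i j => decide (y i = y j))
  cases hKeq : Keq with
  | true =>
    exfalso
    have hyeq : ∀ i, y (ρ i) = y (ρ 0) := by
      intro i
      rcases Nat.eq_zero_or_pos i with rfl | hi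
      · rfl
      · have h := (hceq 0 i hi).trans hKeq
        exact (of_decide_eq_true h).symm
    refine hnm (sepV hT (y (ρ 0)) (fun k => p (ρ k)) (fun k => q (ρ k))
      (fun i => hpq _) (fun i j hij => hcross _ _ (hρ hij))
      (fun i => ⟨fun e => hyW (ρ 0) (e ▸ hpW (ρ i)), fun e => hyW (ρ 0) (e ▸ hqW (ρ i))⟩)
      (fun i => by rw [← hyeq i]; exact hsepw (ρ i)))
  | false =>
  have hydist : ∀ i j, i ≠ j → y (ρ i) ≠ y (ρ j) := by
    intro i j hij e
    rcases Nat.lt_or_ge i j with h | h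
    · have := hceq i j h
      rw [hKeq, decide_eq_false_iff_not] at this
      exact this e
    · have := hceq j i (by omega)
      rw [hKeq, decide_eq_false_iff_not] at this
      exact this e.symm
  set X : ℕ → V := fun n => if Even n then p (ρ (n / 2)) else q (ρ (n / 2)) with hXdef
  have hXe : ∀ k, X (2*k) = p (ρ k) := by
    intro k; rw [hXdef]; dsimp only
    have h2 : (2*k) / 2 = k := by omega
    split_ifs with h
    · rw [h2]
    · exact absurd ⟨k, by omega⟩ h
  have hXo : ∀ k, X (2*k+1) = q (ρ k) := by
    intro k; rw [hXdef]; dsimp only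
    have h2 : (2*k+1) / 2 = k := by omega
    split_ifs with h
    · obtain ⟨m, hm⟩ := h; omega
    · rw [h2]
  have hXW : ∀ m, X m ∈ W := by
    intro m
    obtain ⟨a, rfl | rfl⟩ : ∃ a, m = 2*a ∨ m = 2*a+1 := ⟨m/2, by omega⟩
    · rw [hXe]; exact hpW _
    · rw [hXo]; exact hqW _
  have hX : ∀ i j, i < j → r (X i) (X j) := by
    intro i j hij
    obtain ⟨a, rfl | rfl⟩ : ∃ a, i = 2*a ∨ i = 2*a+1 := ⟨i/2, by omega⟩ <;>
      obtain ⟨b, rfl | rfl⟩ : ∃ b, j = 2*b ∨ j = 2*b+1 := ⟨j/2, by omega⟩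
    · rw [hXe, hXe]; exact (hcross _ _ (hρ (by omega))).1
    · rw [hXe, hXo]
      rcases Nat.lt_or_ge a b with h | h
      · exact (hcross _ _ (hρ h)).2.1
      · have hab : a = b := by omega
        subst hab; exact hpq _
    · rw [hXo, hXe]; exact (hcross _ _ (hρ (by omega))).2.2.1
    · rw [hXo, hXo]; exact (hcross _ _ (hρ (by omega))).2.2.2
  have hsepX : ∀ k, (r (X (2*k)) (y (ρ k)) ∧ r (y (ρ k)) (X (2*k+1))) ∨
      (r (X (2*k+1)) (y (ρ k)) ∧ r (y (ρ k)) (X (2*k))) := by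
    intro k
    rw [hXe, hXo]
    have hs := hsepw (ρ k)
    have hnep : y (ρ k) ≠ p (ρ k) := fun e => hyW _ (e ▸ hpW _)
    have hneq : y (ρ k) ≠ q (ρ k) := fun e => hyW _ (e ▸ hqW _)
    by_cases h1 : r (p (ρ k)) (y (ρ k))
    · have h2 : ¬ r (q (ρ k)) (y (ρ k)) := fun h => hs (iff_of_true h1 h)
      exact Or.inl ⟨h1, r_of_not_r hT hneq h2⟩
    · have h2 : r (q (ρ k)) (y (ρ k)) := by
        by_contra h2
        exact hs (iff_of_false h1 h2)
      exact Or.inr ⟨h2, r_of_not_r hT hnep h1⟩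
  rcases pairMachine hT X (fun k => y (ρ k)) hX
    (fun k m e => hyW _ (e ▸ hXW m)) (fun k m hkm => hydist k m hkm) hsepX with hmem | hesc
  · exact absurd hmem hnm
  obtain ⟨φ, hφ, hint, hbits⟩ := hesc
  set s : ℕ → V := fun g => y (ρ (φ g)) with hsdef
  have hint1 : ∀ g, r (p (ρ (φ g))) (s g) := fun g => by
    have h := (hint g).1; rwa [hXe] at h
  have hint2 : ∀ g, r (s g) (q (ρ (φ g))) := fun g => by
    have h := (hint g).2; rwa [hXo] at h
  have hb1 : ∀ i j, i < j → r (s i) (p (ρ (φ j))) := fun i j hij => by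
    have h := (hbits i j hij).1; rwa [hXe] at h
  have hb2 : ∀ i j, i < j → r (p (ρ (φ i))) (s j) := fun i j hij => by
    have h := (hbits i j hij).2.1; rwa [hXe] at h
  have hb3 : ∀ i j, i < j → r (s i) (q (ρ (φ j))) := fun i j hij => by
    have h := (hbits i j hij).2.2.1; rwa [hXo] at h
  have hb4 : ∀ i j, i < j → r (q (ρ (φ i))) (s j) := fun i j hij => by
    have h := (hbits i j hij).2.2.2.1; rwa [hXo] at h
  have hb5 : ∀ i j, i < j → r (s i) (s j) := fun i j hij => (hbits i j hij).2.2.2.2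
  have hsW : ∀ g, s g ∉ W := fun g => hyW _
  obtain ⟨ψ, hψ, hGor⟩ := subseq_or (fun g => s g ∈ GSet r L)
  rcases hGor with hin | hout
  · -- separators inside G : descents over the maximal W, run the main analysis
    have hdesc : ∀ g, ∃ b' c', b' ∈ W ∧ c' ∈ W ∧ r b' c' ∧ r c' (s (ψ g)) ∧ r (s (ψ g)) b' :=
      fun g => descent_of_insert hT hWac (hsW _) (hWmax _ (hin g) (hsW _))
    choose bb cc hbbW hccW hbc' hcs' hsb' using hdesc
    have hsinj : Function.Injective (fun g => s (ψ g)) := by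
      intro a b e
      by_contra hne
      exact hydist (φ (ψ a)) (φ (ψ b))
        (fun e2 => hne (hψ.injective (hφ.injective e2))) e
    rcases caseC hT W hWac (fun g => s (ψ g)) bb cc hsinj (fun g => hsW _) hbbW hccW
      hbc' hcs' hsb' with hmem | hout2
    · exact absurd hmem hnm
    obtain ⟨β, γ, ψ', hβW, hγW, hβγ, hψ', hcond⟩ := hout2
    refine ⟨β, γ, hWG hβW, hWG hγW, hβγ, fun k => s (ψ (ψ' k)), ?_, ?_⟩
    · intro a b e
      exact hψ'.injective (hsinj e)
    · intro k pr hpr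
      rcases List.mem_cons.mp hpr with rfl | hpr
      · exact ⟨(hcond k).1, (hcond k).2⟩
      · exact hin (ψ' k) pr hpr
  · -- separators outside G : a defect pigeonhole gives V
    exfalso
    have hdef : ∀ g, ∃ ipr : Fin L.length × Bool,
        (ipr.2 = true → ¬ r (s (ψ g)) (L.get ipr.1).1) ∧
        (ipr.2 = false → ¬ r (L.get ipr.1).2 (s (ψ g))) := by
      intro g
      have h := hout g
      simp only [GSet, Set.mem_setOf_eq] at h
      push_neg at h
      obtain ⟨pr, hpr, hcond⟩ := h
      obtain ⟨n, hn⟩ := List.mem_iff_get.mp hpr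
      by_cases h1 : r (s (ψ g)) pr.1
      · refine ⟨(n, false), by simp, fun _ => ?_⟩
        rw [hn]
        exact fun h2 => hcond h1 h2
      · exact ⟨(n, true), fun _ => by rw [hn]; exact h1, by simp⟩
    choose ipr hiprT hiprF using hdef
    obtain ⟨ip0, σ, hσ, hipconst⟩ := pigeon_subseq ipr
    have hpair_mem : L.get ip0.1 ∈ L := L.get_mem _
    have hWb : ∀ x, x ∈ W → r x (L.get ip0.1).1 := fun x hx => ((hWG hx) _ hpair_mem).1
    have hWc : ∀ x, x ∈ W → r (L.get ip0.1).2 x := fun x hx => ((hWG hx) _ hpair_mem).2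
    have hsnb : ∀ g, s g ≠ (L.get ip0.1).1 := by
      intro g e
      have hiff : r (p (ρ (φ g))) (s g) ↔ r (q (ρ (φ g))) (s g) := by
        rw [e]
        exact iff_of_true (hWb _ (hpW _)) (hWb _ (hqW _))
      exact hsepw (ρ (φ g)) hiff
    have hsnc : ∀ g, s g ≠ (L.get ip0.1).2 := by
      intro g e
      have hiff : r (p (ρ (φ g))) (s g) ↔ r (q (ρ (φ g))) (s g) := by
        rw [e]
        exact iff_of_false (asymm_of_r hT (hWc _ (hpW _))) (asymm_of_r hT (hWc _ (hqW _)))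
      exact hsepw (ρ (φ g)) hiff
    set θ : ℕ → ℕ := fun g => ψ (σ g) with hθdef
    have hθm : StrictMono θ := fun a b h => hψ (hσ h)
    by_cases hside : ip0.2 = true
    · have hposb : ∀ g, r (L.get ip0.1).1 (s (θ g)) := by
        intro g
        have hT1 := hiprT (σ g)
        rw [hipconst g] at hT1
        exact r_of_not_r hT (fun e => hsnb _ e.symm) (hT1 hside)
      refine hnm (vlemF hT (L.get ip0.1).1 (fun g => s (θ g)) (fun g => q (ρ (φ (θ g))))
        (fun i => hint2 _)
        (fun i j hij => ⟨hb5 _ _ (hθm hij), hb3 _ _ (hθm hij), hb4 _ _ (hθm hij),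
          (hcross _ _ (hρ (hφ (hθm hij)))).2.2.2⟩)
        hposb (fun i => hWb _ (hqW _)))
    · have hside' : ip0.2 = false := by
        revert hside; cases ip0.2 <;> simp
      have hposc : ∀ g, r (s (θ g)) (L.get ip0.1).2 := by
        intro g
        have hT1 := hiprF (σ g)
        rw [hipconst g] at hT1
        exact r_of_not_r hT (hsnc _) (hT1 hside')
      refine hnm (vlemF hT (L.get ip0.1).2 (fun g => p (ρ (φ (θ g)))) (fun g => s (θ g))
        (fun i => hint1 _)
        (fun i j hij => ⟨(hcross _ _ (hρ (hφ (hθm hij)))).1, hb2 _ _ (hθm hij),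
          hb1 _ _ (hθm hij), hb5 _ _ (hθm hij)⟩)
        (fun i => hWc _ (hpW _)) hposc)

end Step2


section Main

variable {V : Type u} {r : V → V → Prop}

lemma step (hT : IsTournament r) (hAI : AcyclicallyIndecomposable r)
    (L : List (V × V)) (hnm : ¬ MemB r)
    (t0 : ℕ → V) (ht0 : Function.Injective t0) (ht0G : ∀ k, t0 k ∈ GSet r L) :
    ∃ β γ : V, β ∈ GSet r L ∧ γ ∈ GSet r L ∧ r β γ ∧
      ∃ t : ℕ → V, Function.Injective t ∧ ∀ k, t k ∈ GSet r ((β,γ) :: L) := by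
  obtain ⟨ψ, hψ, hdir⟩ := chain_extract hT t0 ht0
  rcases hdir with hasc | hdesc
  · exact stepCore hT hAI L hnm (fun k => t0 (ψ k)) hasc (fun k => ht0G _)
  · have hT' := flip_isTournament hT
    have hAI' := flip_AI hT hAI
    have hnm' : ¬ MemB (fun x y => r y x) := fun h => hnm (MemB_of_flip hT h)
    have hG' : ∀ k, t0 (ψ k) ∈ GSet (fun x y => r y x) (L.map Prod.swap) := by
      intro k; rw [GSet_flip]; exact ht0G _
    obtain ⟨β', γ', hβ', hγ', hβγ', t, htinj, htG⟩ :=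
      stepCore hT' hAI' (L.map Prod.swap) hnm' (fun k => t0 (ψ k))
        (fun i j hij => hdesc i j hij) hG'
    rw [GSet_flip] at hβ' hγ'
    refine ⟨γ', β', hγ', hβ', hβγ', t, htinj, ?_⟩
    intro k pr hpr
    rcases List.mem_cons.mp hpr with rfl | hpr
    · have h := htG k ((β', γ')) (List.mem_cons_self)
      exact ⟨h.2, h.1⟩
    · have h : t k ∈ GSet (fun x y => r y x) (L.map Prod.swap) :=
        fun pr' hpr' => htG k pr' (List.mem_cons_of_mem _ hpr')
      rw [GSet_flip] at h
      exact h pr hpr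

lemma mainLemma (hT : IsTournament r) (hInf : Infinite V)
    (hAI : AcyclicallyIndecomposable r) : MemB r := by
  classical
  by_contra hnm
  haveI := hInf
  have h0 : ∃ t : ℕ → V, Function.Injective t ∧ ∀ k, t k ∈ GSet r [] := by
    exact ⟨Infinite.natEmbedding V, (Infinite.natEmbedding V).injective,
      fun k pr hpr => absurd hpr List.not_mem_nil⟩
  have hstep : ∀ (st : Σ' (L : List (V × V)),
      ∃ t : ℕ → V, Function.Injective t ∧ ∀ k, t k ∈ GSet r L),
      ∃ (bg : V × V), bg.1 ∈ GSet r st.1 ∧ bg.2 ∈ GSet r st.1 ∧ r bg.1 bg.2 ∧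
        ∃ t : ℕ → V, Function.Injective t ∧ ∀ k, t k ∈ GSet r (bg :: st.1) := by
    rintro ⟨L, t0, ht0, ht0G⟩
    obtain ⟨β, γ, h1, h2, h3, ht⟩ := step hT hAI L hnm t0 ht0 ht0G
    exact ⟨(β, γ), h1, h2, h3, ht⟩
  let St := Σ' (L : List (V × V)), ∃ t : ℕ → V, Function.Injective t ∧ ∀ k, t k ∈ GSet r L
  let next : St → St := fun st => ⟨(hstep st).choose :: st.1, ((hstep st).choose_spec).2.2.2⟩
  let F : ℕ → St := fun n => Nat.rec ⟨[], h0⟩ (fun _ prev => next prev) n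
  have hFsucc : ∀ n, F (n+1) = next (F n) := fun n => rfl
  let P : ℕ → V × V := fun n => (hstep (F n)).choose
  have hP : ∀ n, (P n).1 ∈ GSet r (F n).1 ∧ (P n).2 ∈ GSet r (F n).1 ∧ r (P n).1 (P n).2 :=
    fun n => ⟨((hstep (F n)).choose_spec).1, ((hstep (F n)).choose_spec).2.1,
      ((hstep (F n)).choose_spec).2.2.1⟩
  have hFL : ∀ n, (F (n+1)).1 = P n :: (F n).1 := fun n => rfl
  have hmemP : ∀ i j, i < j → P i ∈ (F j).1 := by
    intro i j hij
    induction j with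
    | zero => omega
    | succ j ih =>
      rw [hFL j]
      rcases Nat.lt_or_ge i j with h | h
      · exact List.mem_cons_of_mem _ (ih h)
      · have he : i = j := by omega
        subst he; exact List.mem_cons_self
  have key : ∀ i j, i < j → (r (P j).1 (P i).1 ∧ r (P i).2 (P j).1) ∧
      (r (P j).2 (P i).1 ∧ r (P i).2 (P j).2) := by
    intro i j hij
    have h1 := (hP j).1 _ (hmemP i j hij)
    have h2 := (hP j).2.1 _ (hmemP i j hij)
    exact ⟨⟨h1.1, h1.2⟩, ⟨h2.1, h2.2⟩⟩
  exact hnm (patB_TFT hT (fun n => (P n).1) (fun n => (P n).2)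
    (fun i j hij => (key i j hij).1.1)
    (fun n => (hP n).2.2)
    (fun i j hij => (key i j hij).1.2)
    (fun i j hij => (key i j hij).2.1)
    (fun i j hij => (key i j hij).2.2))

end Main


/-- Every infinite acyclically indecomposable tournament contains a
subtournament isomorphic to a member of `𝔅`. -/
theorem morphology {V : Type u} (r : V → V → Prop) (hT : IsTournament r)
    (hInf : Infinite V) (hAI : AcyclicallyIndecomposable r) :
    ∃ S ∈ frakB, S.EmbedsIn r := by
  exact mainLemma hT hInf hAI
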